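/- arXiv:1112.1663 — 3 statements merged into one kernel-verified Lean document; each statement's English description precedes it below -/
import Mathlib

section
/- Let d ≥ 1, ν > 0, β ∈ (0,1/2], α ∈ (1/2,1) with α + β > 1, and set θ = 2(α+β−1) ∈ (0,1). Let a : ℝ^d → ℝ be continuous, bounded, integrable and positive with a(0) > 0; put R̂₀(p) = a(p)/|p|^{d+2(α−1)}, 𝔤(p) = ν|p|^{2β}, and define the autocorrelation function R(t,x) = (2π)^{−d} ∫_{ℝ^d} e^{−𝔤(p)|t|} R̂₀(p) cos(p·x) dp for t ∈ ℝ, x ∈ ℝ^d. Then for every x ∈ ℝ^d one has ∫_0^∞ |R(t,x)| dt = +∞. -/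
open MeasureTheory Real Set
open scoped ENNReal RealInnerProductSpace
noncomputable section
set_option maxHeartbeats 1000000

lemma rad_calc {r e : ℝ} (d n : ℕ) (hr : 0 < r) :
    (r / 2 ^ (n + 1)) ^ (-e) * (r / 2 ^ n) ^ d
      = (2 ^ e * r ^ ((d : ℝ) - e)) * ((2 : ℝ) ^ (e - (d : ℝ))) ^ n := by
  have h2n : (0 : ℝ) < 2 ^ n := by positivity
  have hb : (0 : ℝ) < r / 2 ^ n := by positivity
  have h1 : (r / 2 ^ (n + 1) : ℝ) = (r / 2 ^ n) / 2 := by rw [pow_succ]; ring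
  have h2 : ((2:ℝ) ^ (e - (d:ℝ))) ^ n = (2:ℝ) ^ ((e - (d:ℝ)) * n) := by
    rw [← Real.rpow_natCast ((2:ℝ) ^ (e - (d:ℝ))) n, ← Real.rpow_mul (by norm_num)]
  have h3 : ((2:ℝ) ^ n : ℝ) = (2:ℝ) ^ (n:ℝ) := by rw [Real.rpow_natCast]
  rw [h1, div_rpow hb.le (by norm_num : (0:ℝ) ≤ 2), div_mul_eq_mul_div,
    ← Real.rpow_natCast (r / 2 ^ n) d, ← Real.rpow_add hb,
    div_rpow hr.le h2n.le, h3, ← Real.rpow_mul (by norm_num : (0:ℝ) ≤ 2),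
    show (n:ℝ) * (-e + (d:ℝ)) = -((e - (d:ℝ)) * n) by ring,
    Real.rpow_neg (by norm_num : (0:ℝ) ≤ 2),
    show -e + (d:ℝ) = (d:ℝ) - e by ring, h2,
    Real.rpow_neg (by norm_num : (0:ℝ) ≤ 2)]
  field_simp

lemma nontriv (d : ℕ) (hd : 1 ≤ d) : Nontrivial (EuclideanSpace ℝ (Fin d)) :=
  ⟨0, EuclideanSpace.single ⟨0, hd⟩ 1, fun h => by
    have := congrArg (fun v : EuclideanSpace ℝ (Fin d) => v ⟨0, hd⟩) h.symm; simp at this⟩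

lemma aux_integrableOn_rpow_ball (d : ℕ) (hd : 1 ≤ d) {e r : ℝ} (he : 0 < e)
    (hed : e < d) (hr : 0 < r) :
    IntegrableOn (fun p : EuclideanSpace ℝ (Fin d) => ‖p‖ ^ (-e)) (Metric.ball 0 r) := by
  haveI := nontriv d hd
  have hmeas : Measurable fun p : EuclideanSpace ℝ (Fin d) => ‖p‖ ^ (-e) :=
    measurable_norm.pow_const _
  constructor
  · exact (hmeas.aestronglyMeasurable).restrict
  · rw [hasFiniteIntegral_iff_ofReal]
    swap
    · exact ae_of_all _ fun p => Real.rpow_nonneg (norm_nonneg p) _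
    set V := volume (Metric.ball (0 : EuclideanSpace ℝ (Fin d)) 1) with hVdef
    have hVtop : V ≠ ⊤ := measure_ball_lt_top.ne
    set A : ℕ → Set (EuclideanSpace ℝ (Fin d)) :=
      fun n => Metric.ball 0 (r / 2 ^ n) \ Metric.ball 0 (r / 2 ^ (n + 1)) with hA
    have hcover : Metric.ball (0 : EuclideanSpace ℝ (Fin d)) r ⊆ {0} ∪ ⋃ n, A n := by
      intro p hp
      rcases eq_or_ne p 0 with h0 | h0
      · exact Or.inl h0
      · have hpn : 0 < ‖p‖ := norm_pos_iff.2 h0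
        have hex : ∃ n : ℕ, r / 2 ^ (n + 1) ≤ ‖p‖ := by
          obtain ⟨n, hn⟩ := pow_unbounded_of_one_lt (r / ‖p‖) (by norm_num : (1:ℝ) < 2)
          refine ⟨n, ?_⟩
          rw [div_le_iff₀ (by positivity)]
          rw [div_lt_iff₀ hpn] at hn
          calc r ≤ ‖p‖ * 2 ^ n := by linarith
            _ ≤ ‖p‖ * 2 ^ (n + 1) := by
                have : (2:ℝ) ^ n ≤ 2 ^ (n+1) := by
                  apply pow_le_pow_right₀ (by norm_num); omega
                nlinarith
        refine Or.inr (mem_iUnion.2 ⟨Nat.find hex, ?_⟩)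
        constructor
        · rw [mem_ball_zero_iff]
          rcases Nat.eq_zero_or_pos (Nat.find hex) with h | h
          · rw [h]; simpa using mem_ball_zero_iff.1 hp
          · obtain ⟨m, hm⟩ := Nat.exists_eq_add_of_lt h
            have := Nat.find_min hex (m := m) (by omega)
            push_neg at this
            simpa [hm, Nat.zero_add] using this
        · rw [mem_ball_zero_iff]; push_neg; exact Nat.find_spec hex
    calc ∫⁻ p in Metric.ball (0 : EuclideanSpace ℝ (Fin d)) r, ENNReal.ofReal (‖p‖ ^ (-e))
        ≤ ∫⁻ p in ({0} ∪ ⋃ n, A n :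
            Set (EuclideanSpace ℝ (Fin d))), ENNReal.ofReal (‖p‖ ^ (-e)) :=
          lintegral_mono_set hcover
      _ ≤ (∫⁻ p in ({0} : Set (EuclideanSpace ℝ (Fin d))), ENNReal.ofReal (‖p‖ ^ (-e)))
            + ∫⁻ p in (⋃ n, A n), ENNReal.ofReal (‖p‖ ^ (-e)) := lintegral_union_le _ _ _
      _ = ∫⁻ p in (⋃ n, A n), ENNReal.ofReal (‖p‖ ^ (-e)) := by
          rw [setLIntegral_measure_zero _ _ (measure_singleton 0), zero_add]
      _ ≤ ∑' n, ∫⁻ p in A n, ENNReal.ofReal (‖p‖ ^ (-e)) := lintegral_iUnion_le _ _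
      _ ≤ ∑' n, ENNReal.ofReal ((2 ^ e * r ^ ((d:ℝ) - e)) * ((2:ℝ) ^ (e - (d:ℝ))) ^ n) * V := by
          refine ENNReal.tsum_le_tsum fun n => ?_
          have hrn : (0:ℝ) < r / 2 ^ (n + 1) := by positivity
          have hstep : ∀ p ∈ A n,
              ENNReal.ofReal (‖p‖ ^ (-e)) ≤ ENNReal.ofReal ((r / 2 ^ (n+1)) ^ (-e)) := by
            intro p hp
            apply ENNReal.ofReal_le_ofReal
            apply Real.rpow_le_rpow_of_nonpos hrn _ (by linarith : -e ≤ 0)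
            have := hp.2
            rw [mem_ball_zero_iff] at this
            push_neg at this
            exact this
          calc ∫⁻ p in A n, ENNReal.ofReal (‖p‖ ^ (-e))
              ≤ ∫⁻ _ in A n, ENNReal.ofReal ((r / 2 ^ (n+1)) ^ (-e)) :=
                setLIntegral_mono' (measurableSet_ball.diff measurableSet_ball) hstep
            _ = ENNReal.ofReal ((r / 2 ^ (n+1)) ^ (-e)) * volume (A n) := setLIntegral_const _ _
            _ ≤ ENNReal.ofReal ((r / 2 ^ (n+1)) ^ (-e)) * volume (Metric.ball
                  (0 : EuclideanSpace ℝ (Fin d)) (r / 2 ^ n)) := by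
                gcongr; exact diff_subset
            _ = ENNReal.ofReal ((r / 2 ^ (n+1)) ^ (-e)) * (ENNReal.ofReal ((r / 2 ^ n) ^ d) * V) := by
                rw [Measure.addHaar_ball _ _ (by positivity : (0:ℝ) ≤ r / 2 ^ n),
                  finrank_euclideanSpace_fin]
            _ = ENNReal.ofReal ((2 ^ e * r ^ ((d:ℝ) - e)) * ((2:ℝ) ^ (e - (d:ℝ))) ^ n) * V := by
                rw [← mul_assoc, ← ENNReal.ofReal_mul (by positivity), rad_calc d n hr]
      _ < ⊤ := by
          have hρ : ENNReal.ofReal ((2:ℝ) ^ (e - (d:ℝ))) < 1 := by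
            rw [ENNReal.ofReal_lt_one]
            exact Real.rpow_lt_one_of_one_lt_of_neg (by norm_num) (by linarith)
          have : ∀ n : ℕ, ENNReal.ofReal ((2 ^ e * r ^ ((d:ℝ) - e)) * ((2:ℝ) ^ (e - (d:ℝ))) ^ n) * V
              = (ENNReal.ofReal (2 ^ e * r ^ ((d:ℝ) - e)) * V) * (ENNReal.ofReal ((2:ℝ) ^ (e - (d:ℝ)))) ^ n := by
            intro n
            rw [ENNReal.ofReal_mul (by positivity), ENNReal.ofReal_pow (by positivity)]
            ring
          rw [tsum_congr this, ENNReal.tsum_mul_left, ENNReal.tsum_geometric]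
          refine ENNReal.mul_lt_top (ENNReal.mul_lt_top ENNReal.ofReal_lt_top hVtop.lt_top) ?_
          rw [show ((⊤:ℝ≥0∞) = (0:ℝ≥0∞)⁻¹) by simp]
          exact ENNReal.inv_lt_inv.mpr (by simpa [pos_iff_ne_zero, tsub_eq_zero_iff_le, not_le] using hρ)

lemma nontriv' (d : ℕ) (hd : 1 ≤ d) : Nontrivial (EuclideanSpace ℝ (Fin d)) :=
  ⟨0, EuclideanSpace.single ⟨0, hd⟩ 1, fun h => by
    have := congrArg (fun v : EuclideanSpace ℝ (Fin d) => v ⟨0, hd⟩) h.symm; simp at this⟩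

lemma aux_lintegral_rpow_ball_top (d : ℕ) (hd : 1 ≤ d) {s δ : ℝ} (hs : (d:ℝ) < s) (hδ : 0 < δ) :
    ∫⁻ p : EuclideanSpace ℝ (Fin d) in Metric.ball 0 δ, ENNReal.ofReal (‖p‖ ^ (-s)) = ⊤ := by
  haveI := nontriv' d hd
  apply ENNReal.eq_top_of_forall_nnreal_le
  intro M
  set V := volume (Metric.ball (0 : EuclideanSpace ℝ (Fin d)) 1) with hVdef
  have hVtop : V ≠ ⊤ := measure_ball_lt_top.ne
  have hV0 : 0 < V := Metric.measure_ball_pos _ _ one_pos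
  set v : ℝ := V.toReal with hv
  have hv0 : 0 < v := ENNReal.toReal_pos hV0.ne' hVtop
  set ε : ℝ := min δ ((v / ((M:ℝ) + 1)) ^ (1 / (s - (d:ℝ)))) with hε
  have hε0 : 0 < ε := lt_min hδ (by positivity)
  have hεδ : ε ≤ δ := min_le_left _ _
  have hkey : ((M:ℝ) + 1) ≤ ε ^ ((d:ℝ) - s) * v := by
    have h1 : ε ^ (s - (d:ℝ)) ≤ v / ((M:ℝ) + 1) := by
      have : ε ≤ (v / ((M:ℝ) + 1)) ^ (1 / (s - (d:ℝ))) := min_le_right _ _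
      calc ε ^ (s - (d:ℝ)) ≤ ((v / ((M:ℝ) + 1)) ^ (1 / (s - (d:ℝ)))) ^ (s - (d:ℝ)) := by
            apply Real.rpow_le_rpow hε0.le this (by linarith)
        _ = v / ((M:ℝ) + 1) := by
            rw [← Real.rpow_mul (by positivity), one_div,
              inv_mul_cancel₀ (by linarith : s - (d:ℝ) ≠ 0), Real.rpow_one]
    have h2 : 0 < ε ^ (s - (d:ℝ)) := Real.rpow_pos_of_pos hε0 _
    have h3 : ε ^ ((d:ℝ) - s) = (ε ^ (s - (d:ℝ)))⁻¹ := by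
      rw [← Real.rpow_neg hε0.le]; ring_nf
    rw [h3, inv_mul_eq_div, le_div_iff₀ h2]
    rw [le_div_iff₀ (by positivity : (0:ℝ) < (M:ℝ) + 1)] at h1
    nlinarith
  -- main chain
  have hchain : ENNReal.ofReal (ε ^ (-s)) * (ENNReal.ofReal (ε ^ d) * V)
      ≤ ∫⁻ p : EuclideanSpace ℝ (Fin d) in Metric.ball 0 δ, ENNReal.ofReal (‖p‖ ^ (-s)) := by
    calc ENNReal.ofReal (ε ^ (-s)) * (ENNReal.ofReal (ε ^ d) * V)
        = ENNReal.ofReal (ε ^ (-s)) * volume (Metric.ball (0 : EuclideanSpace ℝ (Fin d)) ε) := by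
          rw [Measure.addHaar_ball _ _ hε0.le, finrank_euclideanSpace_fin]
      _ = ENNReal.ofReal (ε ^ (-s)) *
            volume (Metric.ball (0 : EuclideanSpace ℝ (Fin d)) ε \ {0}) := by
          rw [measure_diff_null (measure_singleton 0)]
      _ = ∫⁻ _ in (Metric.ball (0 : EuclideanSpace ℝ (Fin d)) ε \ {0}),
            ENNReal.ofReal (ε ^ (-s)) := (setLIntegral_const _ _).symm
      _ ≤ ∫⁻ p in (Metric.ball (0 : EuclideanSpace ℝ (Fin d)) ε \ {0}),
            ENNReal.ofReal (‖p‖ ^ (-s)) := by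
          refine setLIntegral_mono' (measurableSet_ball.diff (measurableSet_singleton _))
            fun p hp => ?_
          apply ENNReal.ofReal_le_ofReal
          apply Real.rpow_le_rpow_of_nonpos (norm_pos_iff.2 (by simpa using hp.2))
            (mem_ball_zero_iff.1 hp.1).le (by linarith : -s ≤ 0)
      _ ≤ ∫⁻ p in Metric.ball (0 : EuclideanSpace ℝ (Fin d)) δ,
            ENNReal.ofReal (‖p‖ ^ (-s)) :=
          lintegral_mono_set (subset_trans diff_subset (Metric.ball_subset_ball hεδ))
  refine le_trans ?_ hchain
  have : ENNReal.ofReal (ε ^ (-s)) * (ENNReal.ofReal (ε ^ d) * V)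
      = ENNReal.ofReal (ε ^ (-s) * ε ^ d * v) := by
    rw [ENNReal.ofReal_mul (by positivity), ENNReal.ofReal_mul (by positivity),
      hv, ENNReal.ofReal_toReal hVtop, mul_assoc]
  rw [this]
  rw [← ENNReal.ofReal_coe_nnreal]
  apply ENNReal.ofReal_le_ofReal
  have : ε ^ (-s) * ε ^ d = ε ^ ((d:ℝ) - s) := by
    rw [← Real.rpow_natCast ε d, ← Real.rpow_add hε0]; ring_nf
  rw [this]
  nlinarith [M.coe_nonneg]
/-- For the long-range spectral data `𝔤(p) = ν|p|^{2β}`,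
`R̂₀(p) = a(p)/|p|^{d+2(α−1)}` with `a` continuous, bounded, integrable, positive, `a 0 > 0`,
`β ∈ (0,1/2]`, `α ∈ (1/2,1)`, `α+β > 1`, the autocorrelation function
`R(t,x) = (2π)^{−d} ∫ e^{−𝔤(p)|t|} R̂₀(p) cos(p·x) dp` satisfies
`∫₀^∞ |R(t,x)| dt = +∞` for every `x`. -/
theorem stmt1 (d : ℕ) (hd : 1 ≤ d) (ν β α θ : ℝ) (hν : 0 < ν)
    (hβ : β ∈ Set.Ioc (0 : ℝ) (1 / 2)) (hα : α ∈ Set.Ioo (1 / 2 : ℝ) 1)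
    (hαβ : 1 < α + β) (hθ : θ = 2 * (α + β - 1))
    (a : EuclideanSpace ℝ (Fin d) → ℝ) (ha_cont : Continuous a)
    (ha_bdd : ∃ M : ℝ, ∀ p, a p ≤ M) (ha_int : Integrable a)
    (ha_pos : ∀ p, 0 < a p) (ha0 : 0 < a 0)
    (R : ℝ → EuclideanSpace ℝ (Fin d) → ℝ)
    (hR : ∀ t x, R t x = (2 * π) ^ (-(d : ℝ)) *
      ∫ p : EuclideanSpace ℝ (Fin d),
        Real.exp (-(ν * ‖p‖ ^ (2 * β)) * |t|) *
          (a p / ‖p‖ ^ ((d : ℝ) + 2 * (α - 1))) * Real.cos ⟪p, x⟫) :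
    ∀ x : EuclideanSpace ℝ (Fin d),
      (∫⁻ t in Set.Ioi (0 : ℝ), ENNReal.ofReal |R t x|) = ⊤ := by
  intro x
  obtain ⟨hβ0, hβ2⟩ := hβ
  obtain ⟨hα1, hα2⟩ := hα
  obtain ⟨M, hM⟩ := ha_bdd
  have hd1 : (1:ℝ) ≤ (d:ℝ) := by exact_mod_cast hd
  set e : ℝ := (d:ℝ) + 2 * (α - 1) with he_def
  have he0 : 0 < e := by rw [he_def]; linarith
  have hed : e < (d:ℝ) := by rw [he_def]; linarith
  have hM0 : 0 < M := lt_of_lt_of_le (ha_pos 0) (hM 0)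
  have hK_nonneg : ∀ p : EuclideanSpace ℝ (Fin d), 0 ≤ a p / ‖p‖ ^ e :=
    fun p => div_nonneg (ha_pos p).le (Real.rpow_nonneg (norm_nonneg p) _)
  have hg_nonneg : ∀ p : EuclideanSpace ℝ (Fin d), 0 ≤ ν * ‖p‖ ^ (2*β) :=
    fun p => mul_nonneg hν.le (Real.rpow_nonneg (norm_nonneg p) _)
  set δ : ℝ := min 1 (1 / (2 * (1 + ‖x‖))) with hδ_def
  have hδ0 : 0 < δ := lt_min one_pos (by positivity)
  have hδ1 : δ ≤ 1 := min_le_left _ _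
  set cd : ℝ := (2 * π) ^ (-(d:ℝ)) with hcd_def
  have hcd : 0 < cd := Real.rpow_pos_of_pos (by positivity) _
  set Ia : ℝ := ∫ p : EuclideanSpace ℝ (Fin d), a p with hIa_def
  have hIa0 : 0 ≤ Ia := integral_nonneg fun p => (ha_pos p).le
  set c : ℝ := ν * δ ^ (2*β) with hc_def
  have hc : 0 < c := mul_pos hν (Real.rpow_pos_of_pos hδ0 _)
  -- cosine bound
  have hcos : ∀ p : EuclideanSpace ℝ (Fin d), ‖p‖ < δ → (1/2 : ℝ) ≤ Real.cos ⟪p,x⟫ := by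
    intro p hp
    have hx0 : (0:ℝ) ≤ ‖x‖ := norm_nonneg x
    obtain ⟨y, hy⟩ : ∃ y : ℝ, ⟪p,x⟫ = y := ⟨_, rfl⟩
    rw [hy]
    have h1 : |y| ≤ ‖p‖ * ‖x‖ := hy ▸ abs_real_inner_le_norm p x
    have h2 : ‖p‖ * ‖x‖ ≤ δ * ‖x‖ := mul_le_mul_of_nonneg_right hp.le hx0
    have h3 : δ * ‖x‖ ≤ 1/2 := by
      have hδ2 : δ ≤ 1 / (2 * (1 + ‖x‖)) := min_le_right _ _
      have h4 : (1 / (2 * (1 + ‖x‖))) * ‖x‖ ≤ 1/2 := by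
        rw [div_mul_eq_mul_div, div_le_div_iff₀ (by positivity) (by norm_num)]
        nlinarith
      nlinarith
    have h5 : y^2 ≤ (1/2:ℝ)^2 := by
      have h6 : |y| ≤ 1/2 := by linarith
      have := abs_nonneg y
      nlinarith [sq_abs y]
    calc (1/2 : ℝ) ≤ 1 - y^2/2 := by nlinarith
      _ ≤ Real.cos y := Real.one_sub_sq_div_two_le_cos
  -- bound on a p / ‖p‖^e
  have hKbound : ∀ p : EuclideanSpace ℝ (Fin d), a p / ‖p‖ ^ e ≤ M * ‖p‖ ^ (-e) := by
    intro p
    rw [Real.rpow_neg (norm_nonneg p), div_eq_mul_inv]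
    exact mul_le_mul_of_nonneg_right (hM p) (by positivity)
  -- integrability of φ_t on balls
  have hφint : ∀ t : ℝ, 0 ≤ t → ∀ r : ℝ, 0 < r →
      IntegrableOn (fun p : EuclideanSpace ℝ (Fin d) =>
        Real.exp (-(ν * ‖p‖ ^ (2*β)) * t) * (a p / ‖p‖ ^ e)) (Metric.ball 0 r) := by
    intro t ht r hr
    have hmeas : Measurable fun p : EuclideanSpace ℝ (Fin d) =>
        Real.exp (-(ν * ‖p‖ ^ (2*β)) * t) * (a p / ‖p‖ ^ e) :=
      (Real.measurable_exp.comp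
        ((((measurable_norm.pow_const _).const_mul ν).neg).mul_const _)).mul
        ((ha_cont.measurable).div (measurable_norm.pow_const _))
    refine Integrable.mono' ((aux_integrableOn_rpow_ball d hd he0 hed hr).const_mul M)
      hmeas.aestronglyMeasurable.restrict (ae_of_all _ fun p => ?_)
    have hexp : Real.exp (-(ν * ‖p‖ ^ (2*β)) * t) ≤ 1 := by
      rw [Real.exp_le_one_iff]
      have := hg_nonneg p
      nlinarith
    rw [Real.norm_eq_abs, abs_mul, abs_of_nonneg (Real.exp_pos _).le,
      abs_of_nonneg (hK_nonneg p)]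
    calc Real.exp (-(ν * ‖p‖ ^ (2*β)) * t) * (a p / ‖p‖ ^ e) ≤ 1 * (a p / ‖p‖ ^ e) :=
          mul_le_mul_of_nonneg_right hexp (hK_nonneg p)
      _ = a p / ‖p‖ ^ e := one_mul _
      _ ≤ M * ‖p‖ ^ (-e) := hKbound p
  -- global integrability of the full integrand
  have hFint : ∀ t : ℝ, Integrable (fun p : EuclideanSpace ℝ (Fin d) =>
      Real.exp (-(ν * ‖p‖ ^ (2*β)) * |t|) * (a p / ‖p‖ ^ e) * Real.cos ⟪p,x⟫) := by
    intro t
    have hmeas : Measurable fun p : EuclideanSpace ℝ (Fin d) =>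
        Real.exp (-(ν * ‖p‖ ^ (2*β)) * |t|) * (a p / ‖p‖ ^ e) * Real.cos ⟪p,x⟫ :=
      ((Real.measurable_exp.comp
        ((((measurable_norm.pow_const _).const_mul ν).neg).mul_const _)).mul
        ((ha_cont.measurable).div (measurable_norm.pow_const _))).mul
        (Real.continuous_cos.comp (continuous_id.inner continuous_const)).measurable
    have habs : ∀ p : EuclideanSpace ℝ (Fin d),
        |Real.exp (-(ν * ‖p‖ ^ (2*β)) * |t|) * (a p / ‖p‖ ^ e) * Real.cos ⟪p,x⟫|
          ≤ a p / ‖p‖ ^ e := by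
      intro p
      have hexp : Real.exp (-(ν * ‖p‖ ^ (2*β)) * |t|) ≤ 1 := by
        rw [Real.exp_le_one_iff]
        have := hg_nonneg p
        have := abs_nonneg t
        nlinarith
      rw [abs_mul, abs_mul, abs_of_nonneg (Real.exp_pos _).le, abs_of_nonneg (hK_nonneg p)]
      calc Real.exp (-(ν * ‖p‖ ^ (2*β)) * |t|) * (a p / ‖p‖ ^ e) * |Real.cos ⟪p,x⟫|
          ≤ 1 * (a p / ‖p‖ ^ e) * 1 := by
            apply mul_le_mul (mul_le_mul_of_nonneg_right hexp (hK_nonneg p))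
              (Real.abs_cos_le_one _) (abs_nonneg _)
            have := hK_nonneg p
            linarith
        _ = a p / ‖p‖ ^ e := by ring
    rw [← integrableOn_univ,
      ← Set.union_compl_self (Metric.ball (0 : EuclideanSpace ℝ (Fin d)) 1)]
    apply IntegrableOn.union
    · refine Integrable.mono' ((aux_integrableOn_rpow_ball d hd he0 hed one_pos).const_mul M)
        hmeas.aestronglyMeasurable.restrict (ae_of_all _ fun p => ?_)
      rw [Real.norm_eq_abs]
      exact (habs p).trans (hKbound p)
    · refine Integrable.mono' ha_int.integrableOn
        hmeas.aestronglyMeasurable.restrict ?_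
      filter_upwards [ae_restrict_mem measurableSet_ball.compl] with p hp
      rw [Real.norm_eq_abs]
      refine (habs p).trans ?_
      have hp1 : (1:ℝ) ≤ ‖p‖ := by
        simp only [Set.mem_compl_iff, Metric.mem_ball, dist_zero_right, not_lt] at hp
        exact hp
      have h1e : (1:ℝ) ≤ ‖p‖ ^ e := by
        calc (1:ℝ) = 1 ^ e := (Real.one_rpow e).symm
          _ ≤ ‖p‖ ^ e := Real.rpow_le_rpow zero_le_one hp1 he0.le
      exact div_le_self (ha_pos p).le h1e
  -- lower bound for R on (0,∞)
  have hRlow : ∀ t : ℝ, 0 < t →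
      cd * (2⁻¹ * ∫ p in Metric.ball (0 : EuclideanSpace ℝ (Fin d)) δ,
          Real.exp (-(ν * ‖p‖ ^ (2*β)) * t) * (a p / ‖p‖ ^ e))
        - cd * (Real.exp (-c * t) * (Ia / δ ^ e)) ≤ R t x := by
    intro t ht
    have hFt := hFint t
    rw [abs_of_pos ht] at hFt
    rw [hR t x, abs_of_pos ht]
    set S := Metric.ball (0 : EuclideanSpace ℝ (Fin d)) δ with hS_def
    have hsplit : (∫ p : EuclideanSpace ℝ (Fin d),
          Real.exp (-(ν * ‖p‖ ^ (2*β)) * t) * (a p / ‖p‖ ^ e) * Real.cos ⟪p,x⟫)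
        = (∫ p in S, Real.exp (-(ν * ‖p‖ ^ (2*β)) * t) * (a p / ‖p‖ ^ e) * Real.cos ⟪p,x⟫)
          + ∫ p in Sᶜ, Real.exp (-(ν * ‖p‖ ^ (2*β)) * t) * (a p / ‖p‖ ^ e) * Real.cos ⟪p,x⟫ :=
      (integral_add_compl measurableSet_ball hFt).symm
    have hmain : 2⁻¹ * (∫ p in S, Real.exp (-(ν * ‖p‖ ^ (2*β)) * t) * (a p / ‖p‖ ^ e))
        ≤ ∫ p in S, Real.exp (-(ν * ‖p‖ ^ (2*β)) * t) * (a p / ‖p‖ ^ e) * Real.cos ⟪p,x⟫ := by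
      have h1 : (∫ p in S, Real.exp (-(ν * ‖p‖ ^ (2*β)) * t) * (a p / ‖p‖ ^ e) * 2⁻¹)
          ≤ ∫ p in S, Real.exp (-(ν * ‖p‖ ^ (2*β)) * t) * (a p / ‖p‖ ^ e) * Real.cos ⟪p,x⟫ := by
        refine setIntegral_mono_on ((hφint t ht.le δ hδ0).mul_const 2⁻¹)
          hFt.integrableOn measurableSet_ball fun p hp => ?_
        have hc2 : (2⁻¹:ℝ) ≤ Real.cos ⟪p,x⟫ := by
          have := hcos p (mem_ball_zero_iff.1 hp)
          linarith
        refine mul_le_mul_of_nonneg_left hc2 ?_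
        have := hg_nonneg p
        have := hK_nonneg p
        positivity
      rw [integral_mul_const] at h1
      linarith
    have htail : |∫ p in Sᶜ, Real.exp (-(ν * ‖p‖ ^ (2*β)) * t) * (a p / ‖p‖ ^ e) * Real.cos ⟪p,x⟫|
        ≤ Real.exp (-c * t) * (Ia / δ ^ e) := by
      have habs : |∫ p in Sᶜ, Real.exp (-(ν * ‖p‖ ^ (2*β)) * t) * (a p / ‖p‖ ^ e) * Real.cos ⟪p,x⟫|
          ≤ ∫ p in Sᶜ, |Real.exp (-(ν * ‖p‖ ^ (2*β)) * t) * (a p / ‖p‖ ^ e) * Real.cos ⟪p,x⟫| := by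
        simpa only [Real.norm_eq_abs] using norm_integral_le_integral_norm
          (μ := volume.restrict Sᶜ)
          (fun p : EuclideanSpace ℝ (Fin d) =>
            Real.exp (-(ν * ‖p‖ ^ (2*β)) * t) * (a p / ‖p‖ ^ e) * Real.cos ⟪p,x⟫)
      have hb2 : (∫ p in Sᶜ, |Real.exp (-(ν * ‖p‖ ^ (2*β)) * t) * (a p / ‖p‖ ^ e) * Real.cos ⟪p,x⟫|)
          ≤ ∫ p in Sᶜ, Real.exp (-c * t) * (a p / δ ^ e) := by
        refine setIntegral_mono_on hFt.abs.integrableOn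
          (((ha_int.div_const (δ ^ e)).const_mul (Real.exp (-c * t))).integrableOn)
          measurableSet_ball.compl fun p hp => ?_
        have hδp : δ ≤ ‖p‖ := by
          simp only [hS_def, Set.mem_compl_iff, Metric.mem_ball, dist_zero_right, not_lt] at hp
          exact hp
        have hgp : c ≤ ν * ‖p‖ ^ (2*β) :=
          mul_le_mul_of_nonneg_left (Real.rpow_le_rpow hδ0.le hδp (by positivity)) hν.le
        have hexp : Real.exp (-(ν * ‖p‖ ^ (2*β)) * t) ≤ Real.exp (-c * t) := by
          rw [Real.exp_le_exp]
          nlinarith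
        have hKp : a p / ‖p‖ ^ e ≤ a p / δ ^ e :=
          div_le_div_of_nonneg_left (ha_pos p).le (Real.rpow_pos_of_pos hδ0 _)
            (Real.rpow_le_rpow hδ0.le hδp he0.le)
        rw [abs_mul, abs_mul, abs_of_nonneg (Real.exp_pos _).le, abs_of_nonneg (hK_nonneg p)]
        calc Real.exp (-(ν * ‖p‖ ^ (2*β)) * t) * (a p / ‖p‖ ^ e) * |Real.cos ⟪p,x⟫|
            ≤ Real.exp (-(ν * ‖p‖ ^ (2*β)) * t) * (a p / ‖p‖ ^ e) * 1 := by
              refine mul_le_mul_of_nonneg_left (Real.abs_cos_le_one _) ?_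
              have := hK_nonneg p
              positivity
          _ = Real.exp (-(ν * ‖p‖ ^ (2*β)) * t) * (a p / ‖p‖ ^ e) := mul_one _
          _ ≤ Real.exp (-c * t) * (a p / δ ^ e) := by
              refine mul_le_mul hexp hKp (hK_nonneg p) (Real.exp_pos _).le
      have hb3 : (∫ p in Sᶜ, Real.exp (-c * t) * (a p / δ ^ e))
          ≤ Real.exp (-c * t) * (Ia / δ ^ e) := by
        rw [integral_const_mul]
        refine mul_le_mul_of_nonneg_left ?_ (Real.exp_pos _).le
        rw [integral_div]
        gcongr
        exact setIntegral_le_integral ha_int (ae_of_all _ fun p => (ha_pos p).le)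
      linarith
    have hneg : -(Real.exp (-c * t) * (Ia / δ ^ e))
        ≤ ∫ p in Sᶜ, Real.exp (-(ν * ‖p‖ ^ (2*β)) * t) * (a p / ‖p‖ ^ e) * Real.cos ⟪p,x⟫ := by
      have := neg_abs_le (∫ p in Sᶜ,
        Real.exp (-(ν * ‖p‖ ^ (2*β)) * t) * (a p / ‖p‖ ^ e) * Real.cos ⟪p,x⟫)
      linarith
    rw [hsplit, mul_add]
    have h2 := mul_le_mul_of_nonneg_left hmain hcd.le
    have h3 := mul_le_mul_of_nonneg_left hneg hcd.le
    rw [mul_neg] at h3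
    linarith
  -- divergence of the main term
  have hAtop : ∫⁻ t in Set.Ioi (0:ℝ), ENNReal.ofReal
      (cd * (2⁻¹ * ∫ p in Metric.ball (0 : EuclideanSpace ℝ (Fin d)) δ,
          Real.exp (-(ν * ‖p‖ ^ (2*β)) * t) * (a p / ‖p‖ ^ e))) = ⊤ := by
    haveI := nontriv' d hd
    obtain ⟨p₀, hp₀mem, hp₀min⟩ :=
      (isCompact_closedBall (0 : EuclideanSpace ℝ (Fin d)) δ).exists_isMinOn
        ⟨0, Metric.mem_closedBall_self hδ0.le⟩ ha_cont.continuousOn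
    have hamin0 : 0 < a p₀ := ha_pos p₀
    have hamin : ∀ p : EuclideanSpace ℝ (Fin d), p ∈ Metric.closedBall 0 δ → a p₀ ≤ a p :=
      fun p hp => hp₀min hp
    set s : ℝ := e + 2*β with hs_def
    have hds : (d:ℝ) < s := by rw [hs_def, he_def]; linarith
    have hA_eq : ∀ t ∈ Set.Ioi (0:ℝ), ENNReal.ofReal
        (cd * (2⁻¹ * ∫ p in Metric.ball (0 : EuclideanSpace ℝ (Fin d)) δ,
            Real.exp (-(ν * ‖p‖ ^ (2*β)) * t) * (a p / ‖p‖ ^ e)))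
        = ENNReal.ofReal (cd * 2⁻¹) *
            ∫⁻ p in Metric.ball (0 : EuclideanSpace ℝ (Fin d)) δ,
              ENNReal.ofReal (Real.exp (-(ν * ‖p‖ ^ (2*β)) * t) * (a p / ‖p‖ ^ e)) := by
      intro t ht
      rw [show cd * (2⁻¹ * ∫ p in Metric.ball (0 : EuclideanSpace ℝ (Fin d)) δ,
            Real.exp (-(ν * ‖p‖ ^ (2*β)) * t) * (a p / ‖p‖ ^ e))
          = (cd * 2⁻¹) * ∫ p in Metric.ball (0 : EuclideanSpace ℝ (Fin d)) δ,
            Real.exp (-(ν * ‖p‖ ^ (2*β)) * t) * (a p / ‖p‖ ^ e) by ring,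
        ENNReal.ofReal_mul (by positivity)]
      congr 1
      exact ofReal_integral_eq_lintegral_ofReal (hφint t (le_of_lt ht) δ hδ0)
        (ae_of_all _ fun p => by
          have h1 := hK_nonneg p
          positivity)
    rw [setLIntegral_congr_fun measurableSet_Ioi hA_eq,
      lintegral_const_mul' _ _ ENNReal.ofReal_ne_top]
    have hswap : (∫⁻ t in Set.Ioi (0:ℝ), ∫⁻ p in Metric.ball (0 : EuclideanSpace ℝ (Fin d)) δ,
          ENNReal.ofReal (Real.exp (-(ν * ‖p‖ ^ (2*β)) * t) * (a p / ‖p‖ ^ e)))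
        = ∫⁻ p in Metric.ball (0 : EuclideanSpace ℝ (Fin d)) δ, ∫⁻ t in Set.Ioi (0:ℝ),
          ENNReal.ofReal (Real.exp (-(ν * ‖p‖ ^ (2*β)) * t) * (a p / ‖p‖ ^ e)) := by
      apply lintegral_lintegral_swap
      apply Measurable.aemeasurable
      apply Measurable.ennreal_ofReal
      exact (Real.measurable_exp.comp
        (((((measurable_norm.comp measurable_snd).pow_const _).const_mul ν).neg).mul
          measurable_fst)).mul
        (((ha_cont.measurable).comp measurable_snd).div
          ((measurable_norm.comp measurable_snd).pow_const _))
    rw [hswap]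
    have hinner : ∀ p : EuclideanSpace ℝ (Fin d),
        p ∈ Metric.ball (0 : EuclideanSpace ℝ (Fin d)) δ \ {0} →
        ENNReal.ofReal ((Real.exp (-1) * (a p₀ / ν)) * ‖p‖ ^ (-s))
          ≤ ∫⁻ t in Set.Ioi (0:ℝ),
              ENNReal.ofReal (Real.exp (-(ν * ‖p‖ ^ (2*β)) * t) * (a p / ‖p‖ ^ e)) := by
      intro p hp
      have hp0 : p ≠ 0 := by simpa using hp.2
      have hpn : 0 < ‖p‖ := norm_pos_iff.2 hp0
      have hap0 : 0 < a p := ha_pos p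
      set b : ℝ := ν * ‖p‖ ^ (2*β) with hb_def
      have hb : 0 < b := mul_pos hν (Real.rpow_pos_of_pos hpn _)
      have h1 : ‖p‖ ^ (-s) = (‖p‖ ^ e)⁻¹ * (‖p‖ ^ (2*β))⁻¹ := by
        rw [← Real.rpow_neg hpn.le, ← Real.rpow_neg hpn.le, ← Real.rpow_add hpn]
        congr 1
        rw [hs_def]; ring
      calc ENNReal.ofReal ((Real.exp (-1) * (a p₀ / ν)) * ‖p‖ ^ (-s))
          ≤ ENNReal.ofReal ((Real.exp (-1) * (a p / ‖p‖ ^ e)) * b⁻¹) := by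
            apply ENNReal.ofReal_le_ofReal
            have hrw : (Real.exp (-1) * (a p / ‖p‖ ^ e)) * b⁻¹
                = (Real.exp (-1) * (a p / ν)) * ((‖p‖ ^ e)⁻¹ * (‖p‖ ^ (2*β))⁻¹) := by
              rw [hb_def, mul_inv]
              have hx : (0:ℝ) < ‖p‖ ^ e := Real.rpow_pos_of_pos hpn _
              have hy : (0:ℝ) < ‖p‖ ^ (2*β) := Real.rpow_pos_of_pos hpn _
              field_simp
            rw [hrw, h1]
            have hap : a p₀ ≤ a p := hamin p (Metric.ball_subset_closedBall hp.1)
            have hx : (0:ℝ) < ‖p‖ ^ e := Real.rpow_pos_of_pos hpn _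
            have hy : (0:ℝ) < ‖p‖ ^ (2*β) := Real.rpow_pos_of_pos hpn _
            gcongr
        _ = ∫⁻ _ in Set.Ioc (0:ℝ) b⁻¹,
              ENNReal.ofReal (Real.exp (-1) * (a p / ‖p‖ ^ e)) := by
            rw [setLIntegral_const, Real.volume_Ioc, sub_zero,
              ← ENNReal.ofReal_mul (by positivity)]
        _ ≤ ∫⁻ t in Set.Ioc (0:ℝ) b⁻¹,
              ENNReal.ofReal (Real.exp (-b * t) * (a p / ‖p‖ ^ e)) := by
            refine setLIntegral_mono' measurableSet_Ioc fun t ht => ?_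
            apply ENNReal.ofReal_le_ofReal
            refine mul_le_mul_of_nonneg_right ?_ (hK_nonneg p)
            rw [Real.exp_le_exp]
            have h2 : b * t ≤ 1 := by
              calc b * t ≤ b * b⁻¹ := by nlinarith [ht.2, ht.1]
                _ = 1 := mul_inv_cancel₀ hb.ne'
            nlinarith
        _ ≤ ∫⁻ t in Set.Ioi (0:ℝ),
              ENNReal.ofReal (Real.exp (-b * t) * (a p / ‖p‖ ^ e)) :=
            lintegral_mono_set Set.Ioc_subset_Ioi_self
    have hae : Metric.ball (0 : EuclideanSpace ℝ (Fin d)) δ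
        =ᵐ[(volume : Measure (EuclideanSpace ℝ (Fin d)))]
          (Metric.ball (0 : EuclideanSpace ℝ (Fin d)) δ \
            ({0} : Set (EuclideanSpace ℝ (Fin d)))) := by
      symm
      apply sdiff_ae_eq_self.mpr
      exact measure_mono_null Set.inter_subset_right (measure_singleton 0)
    have hlower : (ENNReal.ofReal (Real.exp (-1) * (a p₀ / ν))) *
        (∫⁻ p in Metric.ball (0 : EuclideanSpace ℝ (Fin d)) δ, ENNReal.ofReal (‖p‖ ^ (-s)))
        ≤ ∫⁻ p in Metric.ball (0 : EuclideanSpace ℝ (Fin d)) δ, ∫⁻ t in Set.Ioi (0:ℝ),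
            ENNReal.ofReal (Real.exp (-(ν * ‖p‖ ^ (2*β)) * t) * (a p / ‖p‖ ^ e)) := by
      rw [← lintegral_const_mul' _ _ ENNReal.ofReal_ne_top,
        setLIntegral_congr hae, setLIntegral_congr hae]
      refine setLIntegral_mono' (measurableSet_ball.diff (measurableSet_singleton _))
        fun p hp => ?_
      rw [← ENNReal.ofReal_mul (by positivity)]
      exact hinner p hp
    have htop : (∫⁻ p in Metric.ball (0 : EuclideanSpace ℝ (Fin d)) δ, ∫⁻ t in Set.Ioi (0:ℝ),
        ENNReal.ofReal (Real.exp (-(ν * ‖p‖ ^ (2*β)) * t) * (a p / ‖p‖ ^ e))) = ⊤ := by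
      rw [eq_top_iff]
      have hCne : ENNReal.ofReal (Real.exp (-1) * (a p₀ / ν)) ≠ 0 :=
        (ENNReal.ofReal_pos.2 (by positivity)).ne'
      calc (⊤:ℝ≥0∞) = ENNReal.ofReal (Real.exp (-1) * (a p₀ / ν)) * ⊤ :=
            (ENNReal.mul_top hCne).symm
        _ = ENNReal.ofReal (Real.exp (-1) * (a p₀ / ν)) *
            ∫⁻ p in Metric.ball (0 : EuclideanSpace ℝ (Fin d)) δ,
              ENNReal.ofReal (‖p‖ ^ (-s)) := by
            rw [aux_lintegral_rpow_ball_top d hd hds hδ0]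
        _ ≤ _ := hlower
    rw [htop]
    exact ENNReal.mul_top (ENNReal.ofReal_pos.2 (by positivity)).ne'
  -- finiteness and measurability of the error term
  have hBmeas : Measurable fun t : ℝ => ENNReal.ofReal (cd * (Real.exp (-c * t) * (Ia / δ ^ e))) := by
    refine Measurable.ennreal_ofReal ?_
    exact (((Real.measurable_exp.comp (measurable_id.const_mul (-c))).mul_const
      (Ia / δ ^ e)).const_mul cd)
  have hBfin : ∫⁻ t in Set.Ioi (0:ℝ),
      ENNReal.ofReal (cd * (Real.exp (-c * t) * (Ia / δ ^ e))) ≠ ⊤ := by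
    have hshape : ∀ t : ℝ, cd * (Real.exp (-c * t) * (Ia / δ ^ e))
        = (cd * (Ia / δ ^ e)) * Real.exp (-c * t) := fun t => by ring
    simp only [hshape]
    have hint : IntegrableOn (fun t : ℝ => (cd * (Ia / δ ^ e)) * Real.exp (-c * t))
        (Set.Ioi (0:ℝ)) := (exp_neg_integrableOn_Ioi 0 hc).const_mul _
    exact ((hasFiniteIntegral_iff_ofReal (ae_of_all _ fun t => by positivity)).1
      hint.hasFiniteIntegral).ne
  -- assembly
  rw [eq_top_iff]
  have hsub : ∫⁻ t in Set.Ioi (0:ℝ),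
      (ENNReal.ofReal (cd * (2⁻¹ * ∫ p in Metric.ball (0 : EuclideanSpace ℝ (Fin d)) δ,
          Real.exp (-(ν * ‖p‖ ^ (2*β)) * t) * (a p / ‖p‖ ^ e)))
        - ENNReal.ofReal (cd * (Real.exp (-c * t) * (Ia / δ ^ e)))) = ⊤ := by
    set HA := fun t : ℝ => ENNReal.ofReal (cd * (2⁻¹ * ∫ p in Metric.ball (0 : EuclideanSpace ℝ (Fin d)) δ,
          Real.exp (-(ν * ‖p‖ ^ (2*β)) * t) * (a p / ‖p‖ ^ e)))
    set HB := fun t : ℝ => ENNReal.ofReal (cd * (Real.exp (-c * t) * (Ia / δ ^ e)))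
    have h1 : (∫⁻ t in Set.Ioi (0:ℝ), HA t) ≤
        (∫⁻ t in Set.Ioi (0:ℝ), (HA t - HB t)) + ∫⁻ t in Set.Ioi (0:ℝ), HB t := by
      rw [← lintegral_add_right _ hBmeas]
      exact lintegral_mono fun t => le_tsub_add
    by_contra h
    have h2 : (∫⁻ t in Set.Ioi (0:ℝ), (HA t - HB t)) + (∫⁻ t in Set.Ioi (0:ℝ), HB t) < ⊤ :=
      ENNReal.add_lt_top.2 ⟨Ne.lt_top h, Ne.lt_top hBfin⟩
    rw [hAtop] at h1
    exact absurd (h1.trans_lt h2) (by simp)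
  calc (⊤ : ℝ≥0∞) = _ := hsub.symm
    _ ≤ ∫⁻ t in Set.Ioi (0:ℝ), ENNReal.ofReal |R t x| := by
      refine lintegral_mono_ae ?_
      filter_upwards [ae_restrict_mem measurableSet_Ioi] with t ht
      rw [← ENNReal.ofReal_sub _ (by positivity)]
      exact ENNReal.ofReal_le_ofReal ((hRlow t ht).trans (le_abs_self _))
end
end

section
/- Let d ≥ 1, δ ∈ (0,2), and let λ : ℝ^d → ℝ be a bounded C¹ function with bounded gradient. Then for every ε ∈ (0,1] and every k ∈ ℝ^d, ∫_{ℝ^d} |p|^{−(d+δ)} (λ(k − p/(2ε)) − λ(k + p/(2ε)))² dp ≤ ε^{−δ} ( ‖∇λ‖_∞² ∫_{|p|≤1} |p|^{2−d−δ} dp + 4‖λ‖_∞² ∫_{|p|>1} |p|^{−(d+δ)} dp ), and in particular the left-hand side is finite. -/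
open MeasureTheory Real Set
open scoped ENNReal RealInnerProductSpace

noncomputable section

lemma stmt7_outerInt (d : ℕ) (s : ℝ) (hs : s < -(d : ℝ)) :
    IntegrableOn (fun p : EuclideanSpace ℝ (Fin d) => ‖p‖ ^ s) {p | 1 < ‖p‖} volume := by
  have hs0 : s < 0 := lt_of_lt_of_le hs (neg_nonpos.mpr (Nat.cast_nonneg d))
  have hfr : ((Module.finrank ℝ (EuclideanSpace ℝ (Fin d))) : ℝ) < -s := by
    rw [finrank_euclideanSpace_fin]; linarith
  have hint : Integrable (fun p : EuclideanSpace ℝ (Fin d) => (1 + ‖p‖) ^ (-(-s)))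
      (volume : Measure (EuclideanSpace ℝ (Fin d))) := integrable_one_add_norm hfr
  have hmeasS : MeasurableSet {p : EuclideanSpace ℝ (Fin d) | 1 < ‖p‖} :=
    measurableSet_lt measurable_const measurable_norm
  refine Integrable.mono' ((hint.const_mul ((2:ℝ) ^ (-s))).restrict)
    ((by fun_prop : Measurable fun p : EuclideanSpace ℝ (Fin d) => ‖p‖ ^ s).aestronglyMeasurable)
    ?_
  filter_upwards [ae_restrict_mem hmeasS] with a ha
  have ha1 : (1:ℝ) < ‖a‖ := ha
  have ha0 : (0:ℝ) < ‖a‖ := lt_trans one_pos ha1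
  rw [Real.norm_eq_abs, abs_of_nonneg (Real.rpow_nonneg (norm_nonneg a) s)]
  have h1 : (1 + ‖a‖) ≤ 2 * ‖a‖ := by linarith
  have h2 : (2 * ‖a‖) ^ s ≤ (1 + ‖a‖) ^ s :=
    Real.rpow_le_rpow_of_nonpos (by linarith) h1 hs0.le
  have h3 : (2 * ‖a‖) ^ s = 2 ^ s * ‖a‖ ^ s := Real.mul_rpow (by norm_num) ha0.le
  have h4 : ‖a‖ ^ s = 2 ^ (-s) * (2 * ‖a‖) ^ s := by
    rw [h3, ← mul_assoc, ← Real.rpow_add (by norm_num : (0:ℝ) < 2)]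
    simp
  rw [h4, neg_neg]
  exact mul_le_mul_of_nonneg_left h2 (Real.rpow_nonneg (by norm_num) _)

lemma stmt7_innerInt (d : ℕ) (hd : 1 ≤ d) (s : ℝ) (hs : -(d : ℝ) < s) :
    IntegrableOn (fun p : EuclideanSpace ℝ (Fin d) => ‖p‖ ^ s) {p | ‖p‖ ≤ 1} volume := by
  have hset : {p : EuclideanSpace ℝ (Fin d) | ‖p‖ ≤ 1} = Metric.closedBall 0 1 := by
    ext p; simp [Metric.mem_closedBall, dist_zero_right]
  have hmeasS : MeasurableSet {p : EuclideanSpace ℝ (Fin d) | ‖p‖ ≤ 1} := by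
    rw [hset]; exact measurableSet_closedBall
  have hmf : Measurable fun p : EuclideanSpace ℝ (Fin d) => ‖p‖ ^ s := by fun_prop
  refine ⟨(hmf.aestronglyMeasurable).restrict, ?_⟩
  rw [HasFiniteIntegral]
  have hnn : ∀ p : EuclideanSpace ℝ (Fin d), 0 ≤ ‖p‖ ^ s :=
    fun p => Real.rpow_nonneg (norm_nonneg p) s
  have hEq : (∫⁻ a in {p : EuclideanSpace ℝ (Fin d) | ‖p‖ ≤ 1}, ‖(‖a‖ ^ s)‖ₑ ∂volume)
      = ∫⁻ a in {p : EuclideanSpace ℝ (Fin d) | ‖p‖ ≤ 1}, ENNReal.ofReal (‖a‖ ^ s) ∂volume :=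
    lintegral_enorm_of_nonneg fun a => hnn a
  rw [hEq]
  rcases le_or_gt 0 s with hs0 | hs0
  · calc ∫⁻ a in {p : EuclideanSpace ℝ (Fin d) | ‖p‖ ≤ 1}, ENNReal.ofReal (‖a‖ ^ s) ∂volume
        ≤ ∫⁻ _ in {p : EuclideanSpace ℝ (Fin d) | ‖p‖ ≤ 1}, 1 ∂volume := by
          refine setLIntegral_mono' hmeasS fun a ha => ?_
          rw [show (1:ℝ≥0∞) = ENNReal.ofReal 1 by simp]
          exact ENNReal.ofReal_le_ofReal (Real.rpow_le_one (norm_nonneg a) ha hs0)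
      _ = volume {p : EuclideanSpace ℝ (Fin d) | ‖p‖ ≤ 1} := by
          rw [setLIntegral_one]
      _ < ⊤ := by rw [hset]; exact measure_closedBall_lt_top
  · have hsne : s ≠ 0 := hs0.ne
    rw [lintegral_eq_lintegral_meas_le _ (ae_of_all _ fun a => hnn a)
      hmf.aemeasurable]
    have hd' : (0:ℝ) < d := by exact_mod_cast hd
    have hsd : s⁻¹ * (d:ℝ) < -1 := by
      have h1 : (d:ℝ) / s < -1 := (div_lt_iff_of_neg hs0).mpr (by linarith)
      calc s⁻¹ * (d:ℝ) = (d:ℝ) / s := by rw [div_eq_mul_inv, mul_comm]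
        _ < -1 := h1
    set μ' := (volume : Measure (EuclideanSpace ℝ (Fin d))).restrict
      {p : EuclideanSpace ℝ (Fin d) | ‖p‖ ≤ 1} with hμ'
    calc ∫⁻ t in Ioi (0:ℝ), μ' {a | t ≤ ‖a‖ ^ s}
        ≤ ∫⁻ t in Ioc (0:ℝ) 1 ∪ Ioi 1, μ' {a | t ≤ ‖a‖ ^ s} :=
          lintegral_mono_set Ioi_subset_Ioc_union_Ioi
      _ ≤ (∫⁻ t in Ioc (0:ℝ) 1, μ' {a | t ≤ ‖a‖ ^ s})
            + ∫⁻ t in Ioi (1:ℝ), μ' {a | t ≤ ‖a‖ ^ s} := lintegral_union_le _ _ _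
      _ < ⊤ := by
        refine ENNReal.add_lt_top.2 ⟨?_, ?_⟩
        · calc (∫⁻ t in Ioc (0:ℝ) 1, μ' {a | t ≤ ‖a‖ ^ s})
              ≤ ∫⁻ _ in Ioc (0:ℝ) 1, volume {p : EuclideanSpace ℝ (Fin d) | ‖p‖ ≤ 1} := by
                refine setLIntegral_mono' measurableSet_Ioc fun t _ => ?_
                calc μ' {a | t ≤ ‖a‖ ^ s} ≤ μ' univ := measure_mono (subset_univ _)
                  _ = volume {p : EuclideanSpace ℝ (Fin d) | ‖p‖ ≤ 1} := by
                    rw [hμ', Measure.restrict_apply_univ]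
            _ = volume {p : EuclideanSpace ℝ (Fin d) | ‖p‖ ≤ 1} * volume (Ioc (0:ℝ) 1) :=
                setLIntegral_const _ _
            _ < ⊤ := by
                refine ENNReal.mul_lt_top ?_ (by simp [Real.volume_Ioc])
                rw [hset]; exact measure_closedBall_lt_top
        · have hb : ∀ t ∈ Ioi (1:ℝ), μ' {a | t ≤ ‖a‖ ^ s} ≤
              ENNReal.ofReal (t ^ (s⁻¹ * (d:ℝ))) *
                volume (Metric.ball (0 : EuclideanSpace ℝ (Fin d)) 1) := by
            intro t ht
            have ht0 : (0:ℝ) < t := lt_trans one_pos ht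
            have hsub : {a : EuclideanSpace ℝ (Fin d) | t ≤ ‖a‖ ^ s} ⊆
                Metric.closedBall 0 (t ^ s⁻¹) := by
              intro a ha
              have hane : a ≠ 0 := by
                intro h0
                rw [h0] at ha
                simp only [mem_setOf_eq, norm_zero, Real.zero_rpow hsne] at ha
                linarith
              have hap : (0:ℝ) < ‖a‖ := norm_pos_iff.mpr hane
              rw [Metric.mem_closedBall, dist_zero_right]
              exact (Real.le_rpow_inv_iff_of_neg hap ht0 hs0).mpr ha
            calc μ' {a | t ≤ ‖a‖ ^ s} ≤ volume {a : EuclideanSpace ℝ (Fin d) | t ≤ ‖a‖ ^ s} :=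
                Measure.restrict_le_self _
              _ ≤ volume (Metric.closedBall (0 : EuclideanSpace ℝ (Fin d)) (t ^ s⁻¹)) :=
                measure_mono hsub
              _ = ENNReal.ofReal ((t ^ s⁻¹) ^ (Module.finrank ℝ (EuclideanSpace ℝ (Fin d)))) *
                  volume (Metric.ball (0 : EuclideanSpace ℝ (Fin d)) 1) :=
                Measure.addHaar_closedBall _ _ (Real.rpow_nonneg ht0.le _)
              _ = ENNReal.ofReal (t ^ (s⁻¹ * (d:ℝ))) *
                  volume (Metric.ball (0 : EuclideanSpace ℝ (Fin d)) 1) := by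
                rw [finrank_euclideanSpace_fin, ← Real.rpow_natCast (t ^ s⁻¹) d,
                  ← Real.rpow_mul ht0.le]
          calc (∫⁻ t in Ioi (1:ℝ), μ' {a | t ≤ ‖a‖ ^ s})
              ≤ ∫⁻ t in Ioi (1:ℝ), ENNReal.ofReal (t ^ (s⁻¹ * (d:ℝ))) *
                  volume (Metric.ball (0 : EuclideanSpace ℝ (Fin d)) 1) :=
                setLIntegral_mono' measurableSet_Ioi hb
            _ = (∫⁻ t in Ioi (1:ℝ), ENNReal.ofReal (t ^ (s⁻¹ * (d:ℝ)))) *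
                  volume (Metric.ball (0 : EuclideanSpace ℝ (Fin d)) 1) :=
                lintegral_mul_const' _ _ measure_ball_lt_top.ne
            _ < ⊤ := ENNReal.mul_lt_top
                ((integrableOn_Ioi_rpow_of_lt hsd one_pos).setLIntegral_lt_top)
                measure_ball_lt_top

/-- Scaling estimate for singular weights applied to symmetric differences:
if `λ : ℝ^d → ℝ` is a bounded `C¹` function with bounded gradient (`|λ| ≤ Cλ`,
`‖∇λ‖ ≤ C∇` pointwise), `δ ∈ (0,2)` and `ε ∈ (0,1]`, then for every `k`,
`∫ |p|^{−(d+δ)} (λ(k − p/(2ε)) − λ(k + p/(2ε)))² dp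
  ≤ ε^{−δ} (C∇² ∫_{|p|≤1} |p|^{2−d−δ} dp + 4 Cλ² ∫_{|p|>1} |p|^{−(d+δ)} dp)`,
and in particular the left-hand side is finite. -/
theorem stmt7 (d : ℕ) (hd : 1 ≤ d) (δ : ℝ) (hδ : δ ∈ Set.Ioo (0 : ℝ) 2)
    (lam : EuclideanSpace ℝ (Fin d) → ℝ) (hlam : ContDiff ℝ 1 lam)
    (Cl Cg : ℝ) (hCl : ∀ x, |lam x| ≤ Cl) (hCg : ∀ x, ‖fderiv ℝ lam x‖ ≤ Cg)
    (ε : ℝ) (hε : ε ∈ Set.Ioc (0 : ℝ) 1) (k : EuclideanSpace ℝ (Fin d)) :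
    (∫⁻ p : EuclideanSpace ℝ (Fin d),
        ENNReal.ofReal (‖p‖ ^ (-((d : ℝ) + δ)) *
          (lam (k - (2 * ε)⁻¹ • p) - lam (k + (2 * ε)⁻¹ • p)) ^ 2)) ≤
      ENNReal.ofReal (ε ^ (-δ) *
        (Cg ^ 2 * (∫ p in {p : EuclideanSpace ℝ (Fin d) | ‖p‖ ≤ 1},
            ‖p‖ ^ (2 - (d : ℝ) - δ)) +
          4 * Cl ^ 2 * ∫ p in {p : EuclideanSpace ℝ (Fin d) | 1 < ‖p‖},
            ‖p‖ ^ (-((d : ℝ) + δ)))) ∧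
    (∫⁻ p : EuclideanSpace ℝ (Fin d),
        ENNReal.ofReal (‖p‖ ^ (-((d : ℝ) + δ)) *
          (lam (k - (2 * ε)⁻¹ • p) - lam (k + (2 * ε)⁻¹ • p)) ^ 2)) < ⊤ := by
  obtain ⟨hδ0, hδ2⟩ := hδ
  obtain ⟨hε0, hε1⟩ := hε
  have hCl0 : 0 ≤ Cl := (abs_nonneg _).trans (hCl 0)
  have hCg0 : 0 ≤ Cg := (norm_nonneg _).trans (hCg 0)
  have hlamc : Continuous lam := hlam.continuous
  have hεne : ε ≠ 0 := ne_of_gt hε0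
  -- Lipschitz estimate via the fundamental theorem of calculus / MVT
  have hlip : ∀ a b : EuclideanSpace ℝ (Fin d), |lam a - lam b| ≤ Cg * ‖a - b‖ := by
    intro a b
    have h := Convex.norm_image_sub_le_of_norm_fderiv_le
      (f := lam) (fun x _ => (hlam.differentiable one_ne_zero).differentiableAt)
      (fun x _ => hCg x) convex_univ (mem_univ b) (mem_univ a)
    simpa [Real.norm_eq_abs] using h
  set F : EuclideanSpace ℝ (Fin d) → ℝ≥0∞ := fun p =>
    ENNReal.ofReal (‖p‖ ^ (-((d : ℝ) + δ)) *
      (lam (k - (2 * ε)⁻¹ • p) - lam (k + (2 * ε)⁻¹ • p)) ^ 2) with hF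
  set G : EuclideanSpace ℝ (Fin d) → ℝ≥0∞ := fun x =>
    ENNReal.ofReal (‖x‖ ^ (-((d : ℝ) + δ)) *
      (lam (k - (2:ℝ)⁻¹ • x) - lam (k + (2:ℝ)⁻¹ • x)) ^ 2) with hG
  have hFmeas : Measurable F := by
    apply ENNReal.measurable_ofReal.comp
    fun_prop
  have hGmeas : Measurable G := by
    apply ENNReal.measurable_ofReal.comp
    fun_prop
  -- change of variables p = ε • x
  have hmap := Measure.map_addHaar_smul (volume : Measure (EuclideanSpace ℝ (Fin d))) hεne
  have h1 : ∫⁻ x, F (ε • x) = ENNReal.ofReal ((ε ^ d)⁻¹) * ∫⁻ p, F p := by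
    rw [← lintegral_map hFmeas (measurable_const_smul ε), hmap, lintegral_smul_measure,
      finrank_euclideanSpace_fin, abs_of_nonneg (by positivity)]
    rfl
  have h2 : ENNReal.ofReal (ε ^ d) * ENNReal.ofReal ((ε ^ d)⁻¹) = 1 := by
    rw [← ENNReal.ofReal_mul (by positivity), mul_inv_cancel₀ (by positivity),
      ENNReal.ofReal_one]
  have hLHS : ∫⁻ p, F p = ENNReal.ofReal (ε ^ d) * ∫⁻ x, F (ε • x) := by
    rw [h1, ← mul_assoc, h2, one_mul]
  -- pointwise identity after rescaling
  have hpt : ∀ x : EuclideanSpace ℝ (Fin d),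
      F (ε • x) = ENNReal.ofReal (ε ^ (-((d : ℝ) + δ))) * G x := by
    intro x
    have hsm : (2 * ε)⁻¹ • (ε • x) = (2:ℝ)⁻¹ • x := by
      rw [smul_smul]
      congr 1
      field_simp
    have hnrm : ‖ε • x‖ = ε * ‖x‖ := by
      rw [norm_smul, Real.norm_eq_abs, abs_of_pos hε0]
    rw [hF, hG]
    simp only [hsm, hnrm]
    rw [Real.mul_rpow hε0.le (norm_nonneg x), mul_assoc,
      ENNReal.ofReal_mul (Real.rpow_nonneg hε0.le _)]
  have hLHS2 : ∫⁻ p, F p = ENNReal.ofReal (ε ^ (-δ)) * ∫⁻ x, G x := by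
    rw [hLHS]
    simp_rw [hpt]
    rw [lintegral_const_mul _ hGmeas, ← mul_assoc, ← ENNReal.ofReal_mul (by positivity)]
    congr 2
    rw [← Real.rpow_natCast ε d, ← Real.rpow_add hε0]
    congr 1
    ring
  -- bound the rescaled integral
  set B : Set (EuclideanSpace ℝ (Fin d)) := {p | ‖p‖ ≤ 1} with hBdef
  have hB : MeasurableSet B := measurableSet_le measurable_norm measurable_const
  have hBc : Bᶜ = {p : EuclideanSpace ℝ (Fin d) | 1 < ‖p‖} := by
    ext p; simp [hBdef, not_le]
  have hIone_nn : 0 ≤ ∫ p in B, ‖p‖ ^ (2 - (d : ℝ) - δ) :=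
    setIntegral_nonneg hB fun p _ => Real.rpow_nonneg (norm_nonneg p) _
  have hItwo_nn : 0 ≤ ∫ p in {p : EuclideanSpace ℝ (Fin d) | 1 < ‖p‖}, ‖p‖ ^ (-((d : ℝ) + δ)) :=
    setIntegral_nonneg (measurableSet_lt measurable_const measurable_norm)
      fun p _ => Real.rpow_nonneg (norm_nonneg p) _
  have hIone : IntegrableOn (fun p : EuclideanSpace ℝ (Fin d) => ‖p‖ ^ (2 - (d : ℝ) - δ)) B :=
    stmt7_innerInt d hd _ (by push_cast; linarith)
  have hItwo : IntegrableOn (fun p : EuclideanSpace ℝ (Fin d) => ‖p‖ ^ (-((d : ℝ) + δ)))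
      {p : EuclideanSpace ℝ (Fin d) | 1 < ‖p‖} :=
    stmt7_outerInt d _ (by push_cast; linarith)
  have bound1 : ∫⁻ x in B, G x ≤
      ENNReal.ofReal (Cg ^ 2 * ∫ p in B, ‖p‖ ^ (2 - (d : ℝ) - δ)) := by
    calc ∫⁻ x in B, G x
        ≤ ∫⁻ x in B, ENNReal.ofReal (Cg ^ 2 * ‖x‖ ^ (2 - (d : ℝ) - δ)) := by
          refine setLIntegral_mono' hB fun x _ => ?_
          rw [hG]
          refine ENNReal.ofReal_le_ofReal ?_
          have hdiff : (lam (k - (2:ℝ)⁻¹ • x) - lam (k + (2:ℝ)⁻¹ • x)) ^ 2 ≤ Cg ^ 2 * ‖x‖ ^ 2 := by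
            have h := hlip (k - (2:ℝ)⁻¹ • x) (k + (2:ℝ)⁻¹ • x)
            have hsub : (k - (2:ℝ)⁻¹ • x) - (k + (2:ℝ)⁻¹ • x) = -x := by
              module
            rw [hsub, norm_neg] at h
            calc (lam (k - (2:ℝ)⁻¹ • x) - lam (k + (2:ℝ)⁻¹ • x)) ^ 2
                = |lam (k - (2:ℝ)⁻¹ • x) - lam (k + (2:ℝ)⁻¹ • x)| ^ 2 := (sq_abs _).symm
              _ ≤ (Cg * ‖x‖) ^ 2 := pow_le_pow_left₀ (abs_nonneg _) h 2
              _ = Cg ^ 2 * ‖x‖ ^ 2 := by ring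
          calc ‖x‖ ^ (-((d : ℝ) + δ)) *
                (lam (k - (2:ℝ)⁻¹ • x) - lam (k + (2:ℝ)⁻¹ • x)) ^ 2
              ≤ ‖x‖ ^ (-((d : ℝ) + δ)) * (Cg ^ 2 * ‖x‖ ^ 2) :=
                mul_le_mul_of_nonneg_left hdiff (Real.rpow_nonneg (norm_nonneg x) _)
            _ = Cg ^ 2 * (‖x‖ ^ (-((d : ℝ) + δ)) * ‖x‖ ^ 2) := by ring
            _ ≤ Cg ^ 2 * ‖x‖ ^ (2 - (d : ℝ) - δ) := by
                refine mul_le_mul_of_nonneg_left ?_ (by positivity)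
                rcases eq_or_ne x 0 with rfl | hx
                · rw [norm_zero, Real.zero_rpow (neg_ne_zero.mpr (by positivity))]
                  simpa using Real.rpow_nonneg le_rfl _
                · have hx0 : (0:ℝ) < ‖x‖ := norm_pos_iff.mpr hx
                  rw [show ‖x‖ ^ 2 = ‖x‖ ^ ((2:ℕ):ℝ) from (Real.rpow_natCast _ 2).symm,
                    ← Real.rpow_add hx0]
                  apply le_of_eq
                  congr 1
                  push_cast
                  ring
      _ = ENNReal.ofReal (∫ p in B, Cg ^ 2 * ‖p‖ ^ (2 - (d : ℝ) - δ)) := by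
          rw [ofReal_integral_eq_lintegral_ofReal (hIone.const_mul _)
            (ae_of_all _ fun p => by positivity)]
      _ = ENNReal.ofReal (Cg ^ 2 * ∫ p in B, ‖p‖ ^ (2 - (d : ℝ) - δ)) := by
          rw [integral_const_mul]
  have bound2 : ∫⁻ x in Bᶜ, G x ≤
      ENNReal.ofReal (4 * Cl ^ 2 *
        ∫ p in {p : EuclideanSpace ℝ (Fin d) | 1 < ‖p‖}, ‖p‖ ^ (-((d : ℝ) + δ))) := by
    rw [hBc]
    calc ∫⁻ x in {p : EuclideanSpace ℝ (Fin d) | 1 < ‖p‖}, G x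
        ≤ ∫⁻ x in {p : EuclideanSpace ℝ (Fin d) | 1 < ‖p‖},
            ENNReal.ofReal (4 * Cl ^ 2 * ‖x‖ ^ (-((d : ℝ) + δ))) := by
          refine setLIntegral_mono' (measurableSet_lt measurable_const measurable_norm)
            fun x _ => ?_
          rw [hG]
          refine ENNReal.ofReal_le_ofReal ?_
          have hdiff : (lam (k - (2:ℝ)⁻¹ • x) - lam (k + (2:ℝ)⁻¹ • x)) ^ 2 ≤ 4 * Cl ^ 2 := by
            have h : |lam (k - (2:ℝ)⁻¹ • x) - lam (k + (2:ℝ)⁻¹ • x)| ≤ 2 * Cl := by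
              calc |lam (k - (2:ℝ)⁻¹ • x) - lam (k + (2:ℝ)⁻¹ • x)|
                  ≤ |lam (k - (2:ℝ)⁻¹ • x)| + |lam (k + (2:ℝ)⁻¹ • x)| := abs_sub _ _
                _ ≤ Cl + Cl := add_le_add (hCl _) (hCl _)
                _ = 2 * Cl := by ring
            calc (lam (k - (2:ℝ)⁻¹ • x) - lam (k + (2:ℝ)⁻¹ • x)) ^ 2
                = |lam (k - (2:ℝ)⁻¹ • x) - lam (k + (2:ℝ)⁻¹ • x)| ^ 2 := (sq_abs _).symm
              _ ≤ (2 * Cl) ^ 2 := pow_le_pow_left₀ (abs_nonneg _) h 2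
              _ = 4 * Cl ^ 2 := by ring
          calc ‖x‖ ^ (-((d : ℝ) + δ)) *
                (lam (k - (2:ℝ)⁻¹ • x) - lam (k + (2:ℝ)⁻¹ • x)) ^ 2
              ≤ ‖x‖ ^ (-((d : ℝ) + δ)) * (4 * Cl ^ 2) :=
                mul_le_mul_of_nonneg_left hdiff (Real.rpow_nonneg (norm_nonneg x) _)
            _ = 4 * Cl ^ 2 * ‖x‖ ^ (-((d : ℝ) + δ)) := by ring
      _ = ENNReal.ofReal (∫ p in {p : EuclideanSpace ℝ (Fin d) | 1 < ‖p‖},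
            4 * Cl ^ 2 * ‖p‖ ^ (-((d : ℝ) + δ))) := by
          rw [ofReal_integral_eq_lintegral_ofReal (hItwo.const_mul _)
            (ae_of_all _ fun p => by positivity)]
      _ = ENNReal.ofReal (4 * Cl ^ 2 *
            ∫ p in {p : EuclideanSpace ℝ (Fin d) | 1 < ‖p‖}, ‖p‖ ^ (-((d : ℝ) + δ))) := by
          rw [integral_const_mul]
  have hJ : ∫⁻ x, G x ≤
      ENNReal.ofReal (Cg ^ 2 * (∫ p in B, ‖p‖ ^ (2 - (d : ℝ) - δ)) +
        4 * Cl ^ 2 * ∫ p in {p : EuclideanSpace ℝ (Fin d) | 1 < ‖p‖},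
          ‖p‖ ^ (-((d : ℝ) + δ))) := by
    calc ∫⁻ x, G x = (∫⁻ x in B, G x) + ∫⁻ x in Bᶜ, G x := (lintegral_add_compl G hB).symm
      _ ≤ ENNReal.ofReal (Cg ^ 2 * ∫ p in B, ‖p‖ ^ (2 - (d : ℝ) - δ)) +
          ENNReal.ofReal (4 * Cl ^ 2 *
            ∫ p in {p : EuclideanSpace ℝ (Fin d) | 1 < ‖p‖}, ‖p‖ ^ (-((d : ℝ) + δ))) :=
        add_le_add bound1 bound2
      _ = _ := by
        rw [← ENNReal.ofReal_add (by positivity) (by positivity)]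
  have hmain : ∫⁻ p, F p ≤
      ENNReal.ofReal (ε ^ (-δ) *
        (Cg ^ 2 * (∫ p in B, ‖p‖ ^ (2 - (d : ℝ) - δ)) +
          4 * Cl ^ 2 * ∫ p in {p : EuclideanSpace ℝ (Fin d) | 1 < ‖p‖},
            ‖p‖ ^ (-((d : ℝ) + δ)))) := by
    rw [hLHS2, ENNReal.ofReal_mul (Real.rpow_nonneg hε0.le _)]
    gcongr
  exact ⟨hmain, lt_of_le_of_lt hmain ENNReal.ofReal_lt_top⟩
end
end

section
/- Let d ≥ 1, θ ∈ (0,1), and let a : ℝ^d → [0,∞) be bounded and continuous with a(0) > 0. Define σ̃(p) = 2a(p)/((2π)^d |p|^{d+θ}) and Ψ(q) = ∫_{ℝ^d} σ̃(p) (cos(p·q) − 1) dp. Then there exists a constant c > 0 such that Ψ(q) ≤ −c |q|^θ for every q ∈ ℝ^d with |q| ≥ 1. -/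
open MeasureTheory Real Set Metric
open scoped RealInnerProductSpace

set_option maxHeartbeats 1000000

noncomputable section

private lemma aux_lint (d : ℕ) {s : ℝ} (hs : -(d : ℝ) < s) (hs0 : s < 0) :
    ∫⁻ x : EuclideanSpace ℝ (Fin d), ENNReal.ofReal (‖x‖ ^ s)
      ∂(volume.restrict (Metric.ball 0 1)) < ⊤ := by
  have h_meas : Measurable fun x : EuclideanSpace ℝ (Fin d) => ‖x‖ ^ s := by fun_prop
  rw [lintegral_eq_lintegral_meas_le _
    (Filter.Eventually.of_forall fun x => Real.rpow_nonneg (norm_nonneg _) s)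
    h_meas.aemeasurable]
  set E := EuclideanSpace ℝ (Fin d)
  set ν := volume.restrict (Metric.ball (0 : E) 1) with hν
  have hexp : s⁻¹ * (d : ℝ) < -1 := by
    rw [mul_comm, ← div_eq_mul_inv, div_lt_iff_of_neg hs0]
    linarith
  calc ∫⁻ t in Ioi (0:ℝ), ν {a | t ≤ ‖a‖ ^ s}
      ≤ ∫⁻ t in Ioc (0:ℝ) 1 ∪ Ioi 1, ν {a | t ≤ ‖a‖ ^ s} :=
        lintegral_mono_set Ioi_subset_Ioc_union_Ioi
    _ ≤ (∫⁻ t in Ioc (0:ℝ) 1, ν {a | t ≤ ‖a‖ ^ s}) + ∫⁻ t in Ioi (1:ℝ), ν {a | t ≤ ‖a‖ ^ s} :=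
        lintegral_union_le _ _ _
    _ < ⊤ := ENNReal.add_lt_top.2 ⟨?_, ?_⟩
  · calc (∫⁻ t in Ioc (0:ℝ) 1, ν {a | t ≤ ‖a‖ ^ s})
        ≤ ∫⁻ _ in Ioc (0:ℝ) 1, volume (Metric.ball (0 : E) 1) := by
          refine setLIntegral_mono' measurableSet_Ioc fun t _ => ?_
          calc ν {a | t ≤ ‖a‖ ^ s} ≤ ν univ := measure_mono (subset_univ _)
            _ = volume (Metric.ball (0 : E) 1) := by
                rw [hν, Measure.restrict_apply_univ]
      _ < ⊤ := by
          rw [setLIntegral_const]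
          exact ENNReal.mul_lt_top measure_ball_lt_top (by simp)
  · have hsub : ∀ t ∈ Ioi (1:ℝ), ν {a | t ≤ ‖a‖ ^ s}
        ≤ ENNReal.ofReal (t ^ (s⁻¹ * (d:ℝ))) * volume (Metric.ball (0 : E) 1) := by
      intro t ht
      have ht0 : (0:ℝ) < t := lt_trans one_pos ht
      have hss : {a : E | t ≤ ‖a‖ ^ s} ⊆ Metric.closedBall 0 (t ^ s⁻¹) := by
        intro a ha
        simp only [mem_setOf_eq] at ha
        have ha0 : a ≠ 0 := by
          intro h
          rw [h, norm_zero, Real.zero_rpow hs0.ne] at ha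
          linarith
        have hna : 0 < ‖a‖ := norm_pos_iff.2 ha0
        rw [Metric.mem_closedBall, dist_zero_right]
        exact (Real.le_rpow_inv_iff_of_neg hna ht0 hs0).2 ha
      calc ν {a | t ≤ ‖a‖ ^ s} ≤ volume {a : E | t ≤ ‖a‖ ^ s} := Measure.restrict_apply_le _ _
        _ ≤ volume (Metric.closedBall (0 : E) (t ^ s⁻¹)) := measure_mono hss
        _ = ENNReal.ofReal ((t ^ s⁻¹) ^ (Module.finrank ℝ E)) * volume (Metric.ball (0 : E) 1) :=
            Measure.addHaar_closedBall _ _ (Real.rpow_nonneg ht0.le _)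
        _ = ENNReal.ofReal (t ^ (s⁻¹ * (d:ℝ))) * volume (Metric.ball (0 : E) 1) := by
            rw [← Real.rpow_natCast (t ^ s⁻¹) (Module.finrank ℝ E), ← Real.rpow_mul ht0.le]
            rw [show Module.finrank ℝ E = d from finrank_euclideanSpace_fin]
    calc ∫⁻ t in Ioi (1:ℝ), ν {a | t ≤ ‖a‖ ^ s}
        ≤ ∫⁻ t in Ioi (1:ℝ), ENNReal.ofReal (t ^ (s⁻¹ * (d:ℝ))) * volume (Metric.ball (0 : E) 1) :=
          setLIntegral_mono' measurableSet_Ioi hsub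
      _ = (∫⁻ t in Ioi (1:ℝ), ENNReal.ofReal (t ^ (s⁻¹ * (d:ℝ)))) * volume (Metric.ball (0 : E) 1) :=
          lintegral_mul_const' _ _ measure_ball_lt_top.ne
      _ < ⊤ := ENNReal.mul_lt_top
          ((integrableOn_Ioi_rpow_of_lt hexp one_pos).setLIntegral_lt_top) measure_ball_lt_top

private lemma aux_ball' (d : ℕ) {s : ℝ} (hs : -(d : ℝ) < s) :
    IntegrableOn (fun p : EuclideanSpace ℝ (Fin d) => ‖p‖ ^ s) (Metric.ball 0 1) volume := by
  have h_meas : Measurable fun x : EuclideanSpace ℝ (Fin d) => ‖x‖ ^ s := by fun_prop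
  refine ⟨h_meas.aestronglyMeasurable, ?_⟩
  rcases lt_or_ge s 0 with hs0 | hs0
  · rw [hasFiniteIntegral_iff_ofReal
      (Filter.Eventually.of_forall fun x => Real.rpow_nonneg (norm_nonneg _) s)]
    exact aux_lint d hs hs0
  · refine HasFiniteIntegral.restrict_of_bounded (C := 1) measure_ball_lt_top ?_
    filter_upwards [ae_restrict_mem measurableSet_ball] with x hx
    rw [Real.norm_of_nonneg (Real.rpow_nonneg (norm_nonneg _) s)]
    exact Real.rpow_le_one (norm_nonneg _) (le_of_lt (mem_ball_zero_iff.1 hx)) hs0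



private lemma aux_int (d : ℕ) (hd : 1 ≤ d) {θ : ℝ} (θpos : 0 < θ) (θlt1 : θ < 1)
    (a : EuclideanSpace ℝ (Fin d) → ℝ) (ha_cont : Continuous a) (ha_nonneg : ∀ p, 0 ≤ a p)
    (A : ℝ) (hA : ∀ p, a p ≤ A) (hdθ : 0 < (d : ℝ) + θ)
    (q : EuclideanSpace ℝ (Fin d)) :
    Integrable (fun p : EuclideanSpace ℝ (Fin d) =>
      (2 * a p / ((2 * π) ^ (d : ℕ) * ‖p‖ ^ ((d : ℝ) + θ))) * (Real.cos ⟪p, q⟫ - 1)) volume := by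
  have hA0 : (0:ℝ) ≤ A := le_trans (ha_nonneg 0) (hA 0)
  have hπ : (0:ℝ) < π := Real.pi_pos
  have hπd : (0:ℝ) < (2 * π) ^ d := by positivity
  haveI : Nontrivial (EuclideanSpace ℝ (Fin d)) := by
    refine Module.nontrivial_of_finrank_pos (R := ℝ) (M := EuclideanSpace ℝ (Fin d)) ?_
    rw [finrank_euclideanSpace_fin]; omega
  set fq : EuclideanSpace ℝ (Fin d) → ℝ := fun p =>
    (2 * a p / ((2 * π) ^ (d : ℕ) * ‖p‖ ^ ((d : ℝ) + θ))) * (Real.cos ⟪p, q⟫ - 1) with hfqdef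
  show Integrable fq volume
  have hinner : Measurable fun p : EuclideanSpace ℝ (Fin d) => ⟪p, q⟫ :=
    (Continuous.inner continuous_id continuous_const).measurable
  have hrpmeas : Measurable fun p : EuclideanSpace ℝ (Fin d) => ‖p‖ ^ ((d : ℝ) + θ) := by
    fun_prop
  have hmeasf : Measurable fq := by
    exact ((measurable_const.mul ha_cont.measurable).div
        (measurable_const.mul hrpmeas)).mul
      ((Real.continuous_cos.measurable.comp hinner).sub measurable_const)
  -- abs bounds on the scattering coefficient
  have habs_coeff : ∀ p : EuclideanSpace ℝ (Fin d), p ≠ 0 →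
      |2 * a p / ((2 * π) ^ (d : ℕ) * ‖p‖ ^ ((d : ℝ) + θ))|
        ≤ 2 * A / ((2 * π) ^ d * ‖p‖ ^ ((d : ℝ) + θ)) := by
    intro p hp
    have hppos : (0:ℝ) < ‖p‖ := norm_pos_iff.2 hp
    have hDpos : (0:ℝ) < (2 * π) ^ d * ‖p‖ ^ ((d : ℝ) + θ) :=
      mul_pos hπd (Real.rpow_pos_of_pos hppos _)
    rw [abs_of_nonneg (div_nonneg (by linarith [ha_nonneg p]) hDpos.le)]
    exact div_le_div₀ (by linarith) (by linarith [hA p]) hDpos le_rfl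
  -- integrable on unit ball
  have hball : IntegrableOn fq (Metric.ball 0 1) volume := by
    have hg : IntegrableOn
        (fun p : EuclideanSpace ℝ (Fin d) =>
          (A * ‖q‖ ^ 2 / (2 * π) ^ d) * ‖p‖ ^ (2 - (d:ℝ) - θ))
        (Metric.ball 0 1) volume := by
      exact (aux_ball' d (by linarith)).const_mul _
    refine Integrable.mono' hg hmeasf.aestronglyMeasurable.restrict ?_
    have h0 : ∀ᵐ p : EuclideanSpace ℝ (Fin d) ∂volume, p ≠ 0 := by
      have h1 : volume ({(0 : EuclideanSpace ℝ (Fin d))} : Set _) = 0 := measure_singleton _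
      rw [ae_iff]
      convert h1 using 2
      ext x; simp
    filter_upwards [ae_restrict_of_ae h0] with p hp0
    have hppos : (0:ℝ) < ‖p‖ := norm_pos_iff.2 hp0
    have hx2 : |Real.cos ⟪p, q⟫ - 1| ≤ ‖p‖ ^ 2 * ‖q‖ ^ 2 / 2 := by
      have h1 : 1 - ⟪p, q⟫ ^ 2 / 2 ≤ Real.cos ⟪p, q⟫ := Real.one_sub_sq_div_two_le_cos
      have h2 : Real.cos ⟪p, q⟫ ≤ 1 := Real.cos_le_one _
      have h3 : |⟪p, q⟫| ≤ ‖p‖ * ‖q‖ := abs_real_inner_le_norm p q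
      have h4 : ⟪p, q⟫ ^ 2 ≤ (‖p‖ * ‖q‖) ^ 2 := by
        rw [← sq_abs]
        exact pow_le_pow_left₀ (abs_nonneg _) h3 2
      rw [abs_of_nonpos (by linarith)]
      nlinarith
    have hD : (0:ℝ) < (2 * π) ^ d * ‖p‖ ^ ((d : ℝ) + θ) :=
      mul_pos hπd (Real.rpow_pos_of_pos hppos _)
    calc ‖fq p‖ = |2 * a p / ((2 * π) ^ (d : ℕ) * ‖p‖ ^ ((d : ℝ) + θ))| * |Real.cos ⟪p, q⟫ - 1| := by
          rw [hfqdef]; exact abs_mul _ _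
      _ ≤ (2 * A / ((2 * π) ^ d * ‖p‖ ^ ((d : ℝ) + θ))) * (‖p‖ ^ 2 * ‖q‖ ^ 2 / 2) :=
          mul_le_mul (habs_coeff p hp0) hx2 (abs_nonneg _)
            (div_nonneg (by linarith) hD.le)
      _ = (A * ‖q‖ ^ 2 / (2 * π) ^ d) * ‖p‖ ^ (2 - (d:ℝ) - θ) := by
          have e1 : ‖p‖ ^ (2 - (d:ℝ) - θ) = ‖p‖ ^ (2:ℝ) / ‖p‖ ^ ((d:ℝ) + θ) := by
            rw [← Real.rpow_sub hppos]; ring_nf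
          have e2 : ‖p‖ ^ (2:ℝ) = ‖p‖ ^ (2:ℕ) := by
            rw [show (2:ℝ) = ((2:ℕ):ℝ) by norm_num, Real.rpow_natCast]
          rw [e1, e2]
          field_simp
  -- integrable on complement of unit ball
  have hcompl : IntegrableOn fq (Metric.ball (0 : EuclideanSpace ℝ (Fin d)) 1)ᶜ volume := by
    have hg : Integrable
        (fun p : EuclideanSpace ℝ (Fin d) =>
          (4 * A * 2 ^ ((d:ℝ) + θ) / (2 * π) ^ d) * (1 + ‖p‖) ^ (-((d:ℝ) + θ))) volume := by
      refine (integrable_one_add_norm ?_).const_mul _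
      rw [finrank_euclideanSpace_fin]; linarith
    refine Integrable.mono' hg.integrableOn hmeasf.aestronglyMeasurable.restrict ?_
    filter_upwards [ae_restrict_mem measurableSet_ball.compl] with p hp
    have hp1 : 1 ≤ ‖p‖ := by
      simp only [Set.mem_compl_iff, Metric.mem_ball, dist_zero_right, not_lt] at hp
      exact hp
    have hppos : (0:ℝ) < ‖p‖ := by linarith
    have hp0 : p ≠ 0 := norm_pos_iff.1 hppos
    have hb1 : (0:ℝ) < ‖p‖ ^ ((d:ℝ) + θ) := Real.rpow_pos_of_pos hppos _
    have hb2 : (0:ℝ) < (1 + ‖p‖) ^ ((d:ℝ) + θ) := Real.rpow_pos_of_pos (by linarith) _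
    have h1 : (1 + ‖p‖) ^ ((d:ℝ) + θ) ≤ 2 ^ ((d:ℝ) + θ) * ‖p‖ ^ ((d:ℝ) + θ) := by
      rw [← Real.mul_rpow (by norm_num) (norm_nonneg _)]
      exact Real.rpow_le_rpow (by linarith) (by linarith) hdθ.le
    have h2 : (1:ℝ) / ‖p‖ ^ ((d:ℝ) + θ) ≤ 2 ^ ((d:ℝ) + θ) / (1 + ‖p‖) ^ ((d:ℝ) + θ) := by
      rw [div_le_div_iff₀ hb1 hb2]
      nlinarith
    have hcos2 : |Real.cos ⟪p, q⟫ - 1| ≤ 2 := by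
      have := Real.neg_one_le_cos ⟪p, q⟫
      have := Real.cos_le_one ⟪p, q⟫
      rw [abs_le]; constructor <;> linarith
    have hD : (0:ℝ) < (2 * π) ^ d * ‖p‖ ^ ((d : ℝ) + θ) := mul_pos hπd hb1
    calc ‖fq p‖ = |2 * a p / ((2 * π) ^ (d : ℕ) * ‖p‖ ^ ((d : ℝ) + θ))| * |Real.cos ⟪p, q⟫ - 1| := by
          rw [hfqdef]; exact abs_mul _ _
      _ ≤ (2 * A / ((2 * π) ^ d * ‖p‖ ^ ((d : ℝ) + θ))) * 2 :=
          mul_le_mul (habs_coeff p hp0) hcos2 (abs_nonneg _)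
            (div_nonneg (by linarith) hD.le)
      _ = (4 * A / (2 * π) ^ d) * (1 / ‖p‖ ^ ((d:ℝ) + θ)) := by field_simp; ring
      _ ≤ (4 * A / (2 * π) ^ d) * (2 ^ ((d:ℝ) + θ) / (1 + ‖p‖) ^ ((d:ℝ) + θ)) :=
          mul_le_mul_of_nonneg_left h2 (div_nonneg (by linarith) hπd.le)
      _ = (4 * A * 2 ^ ((d:ℝ) + θ) / (2 * π) ^ d) * (1 + ‖p‖) ^ (-((d:ℝ) + θ)) := by
          rw [Real.rpow_neg (by linarith)]
          field_simp
  rw [← integrableOn_univ, ← Set.union_compl_self (Metric.ball (0 : EuclideanSpace ℝ (Fin d)) 1)]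
  exact hball.union hcompl

/-- For the Lévy exponent `Ψ(q) = ∫ σ̃(p)(cos(p·q) − 1) dp` with
`σ̃(p) = 2a(p)/((2π)^d |p|^{d+θ})`, `a ≥ 0` bounded continuous with `a 0 > 0` and `θ ∈ (0,1)`,
there is `c > 0` such that `Ψ(q) ≤ −c|q|^θ` whenever `|q| ≥ 1`. -/
theorem stmt15 (d : ℕ) (hd : 1 ≤ d) (θ : ℝ) (hθ : θ ∈ Set.Ioo (0 : ℝ) 1)
    (a : EuclideanSpace ℝ (Fin d) → ℝ) (ha_cont : Continuous a) (ha_nonneg : ∀ p, 0 ≤ a p)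
    (ha_bdd : ∃ A : ℝ, ∀ p, a p ≤ A) (ha0 : 0 < a 0)
    (Ψ : EuclideanSpace ℝ (Fin d) → ℝ)
    (hΨ : ∀ q, Ψ q = ∫ p : EuclideanSpace ℝ (Fin d),
      (2 * a p / ((2 * π) ^ (d : ℕ) * ‖p‖ ^ ((d : ℝ) + θ))) * (Real.cos ⟪p, q⟫ - 1)) :
    ∃ c : ℝ, 0 < c ∧ ∀ q : EuclideanSpace ℝ (Fin d), 1 ≤ ‖q‖ → Ψ q ≤ -c * ‖q‖ ^ θ := by
  obtain ⟨A, hA⟩ := ha_bdd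
  obtain ⟨θpos, θlt1⟩ := hθ
  have hA0 : (0:ℝ) ≤ A := le_trans (ha_nonneg 0) (hA 0)
  have hπ : (0:ℝ) < π := Real.pi_pos
  have hπ3 : (3:ℝ) < π := Real.pi_gt_three
  have hπd : (0:ℝ) < (2 * π) ^ d := by positivity
  have hdθ : (0:ℝ) < (d:ℝ) + θ := by
    have : (1:ℝ) ≤ (d:ℝ) := by exact_mod_cast hd
    linarith
  haveI : Nontrivial (EuclideanSpace ℝ (Fin d)) := by
    refine Module.nontrivial_of_finrank_pos (R := ℝ) (M := EuclideanSpace ℝ (Fin d)) ?_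
    rw [finrank_euclideanSpace_fin]; omega
  -- radius on which `a ≥ a 0 / 2`
  obtain ⟨δ, hδpos, hδ⟩ := Metric.continuousAt_iff.1 (ha_cont.continuousAt (x := 0))
    (a 0 / 2) (half_pos ha0)
  have har : ∀ p : EuclideanSpace ℝ (Fin d), ‖p‖ ≤ δ / 2 → a 0 / 2 ≤ a p := by
    intro p hp
    have hd1 : dist p 0 < δ := by rw [dist_zero_right]; linarith
    have h2 := hδ hd1
    rw [Real.dist_eq] at h2
    have h3 := abs_lt.1 h2
    linarith [h3.1]
  set s0 := min (δ / 2) 1 with hs0def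
  have hs0pos : 0 < s0 := lt_min (half_pos hδpos) one_pos
  have hs0le1 : s0 ≤ 1 := min_le_right _ _
  have hs0ler : s0 ≤ δ / 2 := min_le_left _ _
  set κ := 2 / π ^ 2 * (5 * s0 / 8) ^ 2 with hκdef
  have hκpos : 0 < κ := by positivity
  set vB := (volume (Metric.ball (0 : EuclideanSpace ℝ (Fin d)) 1)).toReal with hvBdef
  have hvBpos : 0 < vB :=
    ENNReal.toReal_pos (measure_ball_pos _ _ one_pos).ne' measure_ball_lt_top.ne
  clear_value vB
  have hs0θ : (0:ℝ) < s0 ^ θ := Real.rpow_pos_of_pos hs0pos θ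
  refine ⟨a 0 * κ * vB / ((2 * π) ^ d * 8 ^ d * s0 ^ θ),
    div_pos (mul_pos (mul_pos ha0 hκpos) hvBpos)
      (mul_pos (mul_pos hπd (by positivity)) hs0θ), ?_⟩
  intro q hq
  have hQ : (0:ℝ) < ‖q‖ := lt_of_lt_of_le one_pos hq
  set fq : EuclideanSpace ℝ (Fin d) → ℝ := fun p =>
    (2 * a p / ((2 * π) ^ (d : ℕ) * ‖p‖ ^ ((d : ℝ) + θ))) * (Real.cos ⟪p, q⟫ - 1) with hfqdef
  have hΨq : Ψ q = ∫ p, fq p ∂volume := hΨ q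
  -- nonpositivity
  have hf_nonpos : ∀ p, fq p ≤ 0 := by
    intro p
    have h1 : 0 ≤ 2 * a p / ((2 * π) ^ (d : ℕ) * ‖p‖ ^ ((d : ℝ) + θ)) := by
      apply div_nonneg (by linarith [ha_nonneg p])
      positivity
    have h2 : Real.cos ⟪p, q⟫ - 1 ≤ 0 := sub_nonpos.2 (Real.cos_le_one _)
    exact mul_nonpos_iff.2 (Or.inl ⟨h1, h2⟩)
  have hint : Integrable fq volume := by
    rw [hfqdef]
    exact aux_int d hd θpos θlt1 a ha_cont ha_nonneg A hA hdθ q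
  -- the test ball
  set e : EuclideanSpace ℝ (Fin d) := ‖q‖⁻¹ • q with he
  have hne : ‖e‖ = 1 := by
    rw [he, norm_smul, norm_inv, norm_norm, inv_mul_cancel₀ hQ.ne']
  set ctr : EuclideanSpace ℝ (Fin d) := (3 * s0 / (4 * ‖q‖)) • e with hctr
  have hctrnorm : ‖ctr‖ = 3 * s0 / (4 * ‖q‖) := by
    rw [hctr, norm_smul, hne, mul_one, Real.norm_eq_abs, abs_of_pos (by positivity)]
  set ρ := s0 / (8 * ‖q‖) with hρ
  have hρpos : 0 < ρ := by positivity
  set S := Metric.closedBall ctr ρ with hSdef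
  have hSmeas : MeasurableSet S := measurableSet_closedBall
  set Kq := (a 0 * κ / (2 * π) ^ d) * (‖q‖ / s0) ^ ((d:ℝ) + θ) with hKqdef
  -- pointwise bound on S
  have key : ∀ p ∈ S, fq p ≤ -Kq := by
    intro p hp
    have hpc : ‖p - ctr‖ ≤ ρ := by
      rw [hSdef, Metric.mem_closedBall, dist_eq_norm] at hp
      exact hp
    have hup : ‖p‖ ≤ 7 * s0 / (8 * ‖q‖) := by
      have h1 : ‖p‖ ≤ ‖ctr‖ + ‖p - ctr‖ := by
        have h2 : p = ctr + (p - ctr) := by abel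
        calc ‖p‖ = ‖ctr + (p - ctr)‖ := by rw [← h2]
          _ ≤ ‖ctr‖ + ‖p - ctr‖ := norm_add_le _ _
      rw [hctrnorm] at h1
      rw [hρ] at hpc
      have h3 : 3 * s0 / (4 * ‖q‖) + s0 / (8 * ‖q‖) = 7 * s0 / (8 * ‖q‖) := by
        field_simp; ring
      linarith
    have hlow : 5 * s0 / (8 * ‖q‖) ≤ ‖p‖ := by
      have h1 : ‖ctr‖ - ‖p‖ ≤ ‖ctr - p‖ := norm_sub_norm_le _ _
      rw [norm_sub_rev] at h1
      rw [hctrnorm] at h1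
      have : 3 * s0 / (4 * ‖q‖) - s0 / (8 * ‖q‖) = 5 * s0 / (8 * ‖q‖) := by
        field_simp; ring
      linarith [hpc, hρ ▸ hpc]
    have hppos : (0:ℝ) < ‖p‖ := lt_of_lt_of_le (by positivity) hlow
    have hple : ‖p‖ ≤ s0 / ‖q‖ := by
      calc ‖p‖ ≤ 7 * s0 / (8 * ‖q‖) := hup
        _ ≤ s0 / ‖q‖ := by
          rw [div_le_div_iff₀ (by positivity) (by positivity)]
          nlinarith
    -- inner product bounds
    have hcq : ⟪ctr, q⟫ = 3 * s0 / 4 := by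
      rw [hctr, he, real_inner_smul_left, real_inner_smul_left, real_inner_self_eq_norm_sq]
      field_simp
    have hiq : |⟪p - ctr, q⟫| ≤ s0 / 8 := by
      calc |⟪p - ctr, q⟫| ≤ ‖p - ctr‖ * ‖q‖ := abs_real_inner_le_norm _ _
        _ ≤ ρ * ‖q‖ := mul_le_mul_of_nonneg_right hpc (norm_nonneg _)
        _ = s0 / 8 := by rw [hρ]; field_simp
    have hsplit : ⟪p, q⟫ = ⟪ctr, q⟫ + ⟪p - ctr, q⟫ := by
      have h2 : ctr + (p - ctr) = p := by abel
      rw [← h2, inner_add_left, h2]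
    have hiq' := abs_le.1 hiq
    have hxlow : 5 * s0 / 8 ≤ ⟪p, q⟫ := by rw [hsplit, hcq]; linarith [hiq'.1]
    have hxup : ⟪p, q⟫ ≤ 7 * s0 / 8 := by rw [hsplit, hcq]; linarith [hiq'.2]
    -- cosine bound
    have hcos : Real.cos ⟪p, q⟫ - 1 ≤ -κ := by
      have habs : |⟪p, q⟫| ≤ π := by
        rw [abs_le]; constructor <;> nlinarith
      have h1 := Real.cos_le_one_sub_mul_cos_sq habs
      have h2 : (5 * s0 / 8) ^ 2 ≤ ⟪p, q⟫ ^ 2 := by nlinarith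
      rw [hκdef]
      have h3 : (0:ℝ) < 2 / π ^ 2 := by positivity
      nlinarith
    -- coefficient lower bound
    have haplow : a 0 / 2 ≤ a p := har p (by
      calc ‖p‖ ≤ s0 / ‖q‖ := hple
        _ ≤ s0 := div_le_self hs0pos.le hq
        _ ≤ δ / 2 := hs0ler)
    have hrp : ‖p‖ ^ ((d:ℝ) + θ) ≤ (s0 / ‖q‖) ^ ((d:ℝ) + θ) :=
      Real.rpow_le_rpow (norm_nonneg _) hple hdθ.le
    have hBpos : (0:ℝ) < (s0 / ‖q‖) ^ ((d:ℝ) + θ) := Real.rpow_pos_of_pos (by positivity) _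
    have hDpos : (0:ℝ) < (2 * π) ^ d * ‖p‖ ^ ((d : ℝ) + θ) :=
      mul_pos hπd (Real.rpow_pos_of_pos hppos _)
    have hσ : a 0 / ((2 * π) ^ d * (s0 / ‖q‖) ^ ((d:ℝ) + θ))
        ≤ 2 * a p / ((2 * π) ^ d * ‖p‖ ^ ((d : ℝ) + θ)) := by
      refine div_le_div₀ (by linarith [ha_nonneg p]) (by linarith) hDpos ?_
      exact mul_le_mul_of_nonneg_left hrp hπd.le
    have hσ0 : (0:ℝ) ≤ 2 * a p / ((2 * π) ^ d * ‖p‖ ^ ((d : ℝ) + θ)) :=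
      div_nonneg (by linarith [ha_nonneg p]) hDpos.le
    have hstep1 : fq p ≤ (2 * a p / ((2 * π) ^ d * ‖p‖ ^ ((d : ℝ) + θ))) * (-κ) := by
      rw [hfqdef]
      exact mul_le_mul_of_nonneg_left hcos hσ0
    have hstep2 : (2 * a p / ((2 * π) ^ d * ‖p‖ ^ ((d : ℝ) + θ))) * (-κ)
        ≤ (a 0 / ((2 * π) ^ d * (s0 / ‖q‖) ^ ((d:ℝ) + θ))) * (-κ) := by
      exact mul_le_mul_of_nonpos_right hσ (by linarith)
    have hKq_eq : (a 0 / ((2 * π) ^ d * (s0 / ‖q‖) ^ ((d:ℝ) + θ))) * (-κ) = -Kq := by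
      rw [hKqdef]
      have e1 : (‖q‖ / s0) ^ ((d:ℝ) + θ) = ((s0 / ‖q‖) ^ ((d:ℝ) + θ))⁻¹ := by
        rw [← Real.inv_rpow (by positivity), inv_div]
      rw [e1, ← div_div, div_eq_mul_inv]
      ring
    linarith [hstep1, hstep2, hKq_eq ▸ hstep2]
  -- putting everything together
  have hstepA : Ψ q ≤ ∫ p in S, fq p ∂volume := by
    have h1 := integral_add_compl hSmeas hint
    have h2 : ∫ p in Sᶜ, fq p ∂volume ≤ 0 := integral_nonpos fun p => hf_nonpos p
    rw [hΨq, ← h1]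
    exact (add_le_iff_nonpos_right _).2 h2
  have hstepB : ∫ p in S, fq p ∂volume ≤ (volume S).toReal * (-Kq) := by
    have hSfin : volume S < ⊤ := by
      rw [hSdef]; exact measure_closedBall_lt_top
    have h1 : ∫ p in S, fq p ∂volume ≤ ∫ _ in S, (-Kq) ∂volume :=
      setIntegral_mono_on hint.integrableOn
        (integrableOn_const hSfin.ne) hSmeas key
    rwa [setIntegral_const, smul_eq_mul] at h1
  have hvolS : (volume S).toReal = ρ ^ d * vB := by
    rw [hSdef, Measure.addHaar_closedBall _ _ hρpos.le,
      show Module.finrank ℝ (EuclideanSpace ℝ (Fin d)) = d from finrank_euclideanSpace_fin,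
      ENNReal.toReal_mul, ENNReal.toReal_ofReal (by positivity), hvBdef]
  have harith : (volume S).toReal * (-Kq)
      = -(a 0 * κ * vB / ((2 * π) ^ d * 8 ^ d * s0 ^ θ)) * ‖q‖ ^ θ := by
    rw [hvolS, hKqdef, hρ]
    have e1 : (‖q‖ / s0) ^ ((d:ℝ) + θ) = ‖q‖ ^ d * ‖q‖ ^ θ / (s0 ^ d * s0 ^ θ) := by
      rw [Real.div_rpow (norm_nonneg _) hs0pos.le, Real.rpow_add hQ, Real.rpow_add hs0pos,
        Real.rpow_natCast, Real.rpow_natCast]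
    rw [e1, div_pow, mul_pow]
    have hQd : (0:ℝ) < ‖q‖ ^ d := by positivity
    have hs0d : (0:ℝ) < s0 ^ d := by positivity
    have hQθ : (0:ℝ) < ‖q‖ ^ θ := Real.rpow_pos_of_pos hQ θ
    field_simp
  calc Ψ q ≤ (volume S).toReal * (-Kq) := le_trans hstepA hstepB
    _ = -(a 0 * κ * vB / ((2 * π) ^ d * 8 ^ d * s0 ^ θ)) * ‖q‖ ^ θ := harith
end
end
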